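/- arXiv:2104.14473 — 3 statements merged into one kernel-verified Lean document; each statement's English description precedes it below -/
import Mathlib

section
/- Let μ be a partition of n and t a semisimple element of a fixed F-stable maximal torus T_μ of GL_n over F̄_q with Frobenius F. The assignment t ↦ (μ[t,a])_{[a]} sending t to the family of subpartitions indexed by Frobenius-orbits [a] of eigenvalues (where μ[t,a] collects those parts μ_i of μ whose corresponding torus factor T_{μ_i} ≅ GL_1(F_{q^{μ_i}}) lies in the [a]-factor of the centralizer of t) satisfies: two elements t, t' ∈ T_μ^F have μ[t,a] = μ[t',a] for all [a] if and only if t and t' are conjugate under the F-fixed points of the relative Weyl group W_{GL_n}(T_μ)^F. -/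
/-- If two tuples have equal multisets of values, they differ by a permutation of indices. -/
lemma exists_perm_of_map_univ_eq : ∀ {k : ℕ} {α : Type*} (f g : Fin k → α),
    Finset.univ.val.map f = Finset.univ.val.map g →
    ∃ π : Equiv.Perm (Fin k), ∀ i, f (π i) = g i := by
  intro k
  induction k with
  | zero => exact fun f g _ => ⟨1, fun i => i.elim0⟩
  | succ k ih =>
    intro α f g h
    have hmem : g (Fin.last k) ∈ Finset.univ.val.map f := by
      rw [h]; exact Multiset.mem_map_of_mem _ (Finset.mem_univ (Fin.last k))
    obtain ⟨j, -, hj⟩ := Multiset.mem_map.mp hmem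
    set s : Equiv.Perm (Fin (k + 1)) := Equiv.swap j (Fin.last k) with hs_def
    have hs : Finset.univ.val.map (⇑s) = Finset.univ.val := by
      simpa [Finset.map_val] using congrArg Finset.val (Finset.map_univ_equiv s)
    have hswap : Finset.univ.val.map f = Finset.univ.val.map (f ∘ s) := by
      conv_rhs => rw [← Multiset.map_map, hs]
    rw [hswap] at h
    have hsplit : (Finset.univ.val : Multiset (Fin (k + 1))) =
        Fin.last k ::ₘ (Finset.univ.val.map Fin.castSucc) := by
      have := congrArg Finset.val (Fin.univ_castSuccEmb k)
      rw [Finset.cons_val, Finset.map_val] at this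
      simpa using this
    rw [hsplit, Multiset.map_cons, Multiset.map_cons, Multiset.map_map, Multiset.map_map] at h
    have hlast : (f ∘ s) (Fin.last k) = g (Fin.last k) := by
      simp [hs_def, Equiv.swap_apply_right, hj]
    rw [hlast] at h
    have h' : Finset.univ.val.map (f ∘ s ∘ Fin.castSucc) =
        Finset.univ.val.map (g ∘ Fin.castSucc) := by
      have := (Multiset.cons_inj_right (g (Fin.last k))).mp h
      simpa [Function.comp] using this
    obtain ⟨π', hπ'⟩ := ih (f ∘ s ∘ Fin.castSucc) (g ∘ Fin.castSucc) h'
    set π'' : Equiv.Perm (Fin (k + 1)) :=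
      (finSuccEquivLast.trans (π'.optionCongr)).trans finSuccEquivLast.symm with hπ''_def
    refine ⟨π''.trans s, fun i => ?_⟩
    refine Fin.lastCases ?_ (fun i0 => ?_) i
    · have : π'' (Fin.last k) = Fin.last k := by
        simp [hπ''_def]
      simpa [Equiv.trans_apply, this, hs_def, Equiv.swap_apply_right] using hj
    · have : π'' (Fin.castSucc i0) = Fin.castSucc (π' i0) := by
        simp [hπ''_def]
      simpa [Equiv.trans_apply, this] using hπ' i0

/-- Frobenius orbits: the orbit of `x ^ q ^ m₀` equals the orbit of `x` when `x` is fixed by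
a power of the `q`-power map. -/
lemma orbit_pow_eq {M : Type*} [Monoid M] (x : M) (q ν : ℕ) (hν : 0 < ν)
    (hx : x ^ q ^ ν = x) (m₀ : ℕ) :
    {y : M | ∃ m : ℕ, y = (x ^ q ^ m₀) ^ q ^ m} = {y : M | ∃ m : ℕ, y = x ^ q ^ m} := by
  have key : ∀ c : ℕ, x ^ (q ^ ν) ^ c = x := by
    intro c
    induction c with
    | zero => simp
    | succ c ihc => rw [pow_succ, pow_mul, ihc, hx]
  have per : ∀ m c : ℕ, x ^ q ^ (m + c * ν) = x ^ q ^ m := by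
    intro m c
    have h1 : q ^ (m + c * ν) = (q ^ ν) ^ c * q ^ m := by
      rw [← pow_mul, ← pow_add]; ring_nf
    rw [h1, pow_mul, key]
  have collapse : ∀ a b : ℕ, (x ^ q ^ a) ^ q ^ b = x ^ q ^ (a + b) := by
    intro a b; rw [← pow_mul, ← pow_add]
  ext y
  constructor
  · rintro ⟨m, rfl⟩
    exact ⟨m₀ + m, collapse m₀ m⟩
  · rintro ⟨m, rfl⟩
    refine ⟨m + m₀ * ν - m₀, ?_⟩
    have hle : m₀ ≤ m + m₀ * ν :=
      le_trans (Nat.le_mul_of_pos_right m₀ hν) (Nat.le_add_left _ _)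
    rw [collapse]
    have : m₀ + (m + m₀ * ν - m₀) = m + m₀ * ν := by omega
    rw [this, per m m₀]

/-- Concrete model of an `F`-stable maximal torus of `GL_n` of type `μ = (μ 0, …, μ (k-1))`:
`T_μ^F ≅ ∏_i GL_1(𝔽_{q^{μ i}})`, an element being a tuple `t` of units of `𝔽̄_q` with
`t i ∈ 𝔽_{q^{μ i}}`.  The subpartition `μ[t,a]` attached to a Frobenius orbit
`[a] = {a^{q^m}}` consists of the parts `μ i` with `t i ∈ [a]`; the data of all `μ[t,·]` is
the multiset of pairs `(μ i, Frobenius orbit of t i)`.  The `F`-fixed relative Weyl group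
`W_{GL_n}(T_μ)^F ≅ C_{S_n}(w_μ)` acts by permuting factors of equal size and by Frobenius
powers within each factor.  Claim: `μ[t,a] = μ[t',a]` for all `[a]` iff `t` and `t'` are
conjugate under `W_{GL_n}(T_μ)^F`. -/
theorem stmt13 (p e k : ℕ) [Fact p.Prime] (he : 0 < e)
    (μ : Fin k → ℕ) (hμ : ∀ i, 0 < μ i)
    (t t' : Fin k → (AlgebraicClosure (GaloisField p e))ˣ)
    (ht : ∀ i, t i ^ (p ^ e) ^ μ i = t i)
    (ht' : ∀ i, t' i ^ (p ^ e) ^ μ i = t' i) :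
    ((Finset.univ.val.map fun i =>
        ((μ i, {y : (AlgebraicClosure (GaloisField p e))ˣ | ∃ m : ℕ, y = t i ^ (p ^ e) ^ m}) :
          ℕ × Set (AlgebraicClosure (GaloisField p e))ˣ)) =
      (Finset.univ.val.map fun i =>
        ((μ i, {y : (AlgebraicClosure (GaloisField p e))ˣ | ∃ m : ℕ, y = t' i ^ (p ^ e) ^ m}) :
          ℕ × Set (AlgebraicClosure (GaloisField p e))ˣ)))
    ↔ ∃ π : Equiv.Perm (Fin k), (∀ i, μ (π i) = μ i) ∧
        ∀ i, ∃ m : ℕ, t' i = t (π i) ^ (p ^ e) ^ m := by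
  set q := p ^ e
  set f : Fin k → ℕ × Set (AlgebraicClosure (GaloisField p e))ˣ := fun i =>
    (μ i, {y | ∃ m : ℕ, y = t i ^ q ^ m}) with hf_def
  set g : Fin k → ℕ × Set (AlgebraicClosure (GaloisField p e))ˣ := fun i =>
    (μ i, {y | ∃ m : ℕ, y = t' i ^ q ^ m}) with hg_def
  constructor
  · intro h
    obtain ⟨π, hπ⟩ := exists_perm_of_map_univ_eq f g h
    refine ⟨π, fun i => congrArg Prod.fst (hπ i), fun i => ?_⟩
    have hset : {y : (AlgebraicClosure (GaloisField p e))ˣ | ∃ m : ℕ, y = t (π i) ^ q ^ m} =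
        {y | ∃ m : ℕ, y = t' i ^ q ^ m} := congrArg Prod.snd (hπ i)
    have : t' i ∈ {y : (AlgebraicClosure (GaloisField p e))ˣ | ∃ m : ℕ, y = t' i ^ q ^ m} :=
      ⟨0, by simp⟩
    rw [← hset] at this
    exact this
  · rintro ⟨π, hπμ, hπt⟩
    have hfg : ∀ i, f (π i) = g i := by
      intro i
      obtain ⟨m₀, hm₀⟩ := hπt i
      have hsets : {y : (AlgebraicClosure (GaloisField p e))ˣ | ∃ m : ℕ, y = t' i ^ q ^ m} =
          {y | ∃ m : ℕ, y = t (π i) ^ q ^ m} := by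
        rw [hm₀]
        exact orbit_pow_eq (t (π i)) q (μ (π i)) (hμ (π i)) (ht (π i)) m₀
      simp only [hf_def, hg_def, Prod.mk.injEq]
      exact ⟨hπμ i, hsets.symm⟩
    have hs : Finset.univ.val.map (⇑π) = Finset.univ.val := by
      simpa [Finset.map_val] using congrArg Finset.val (Finset.map_univ_equiv π)
    calc Finset.univ.val.map f = (Finset.univ.val.map (⇑π)).map f := by rw [hs]
      _ = Finset.univ.val.map (f ∘ π) := by rw [Multiset.map_map]
      _ = Finset.univ.val.map g := Multiset.map_congr rfl (by intro i _; exact hfg i)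
end

section
/- Fix partitions μ' ⊆ μ of m ≤ n and n respectively, a semisimple element t in the F-stable maximal torus T_μ of GL_n of type μ, and the set D(μ,μ',t) of restrictions to T_{μ'} of W_{GL_n}(T_μ)^F-conjugates of t. Then there is a bijection between the W_{GL_m}(T_{μ'})^F-conjugacy classes in D(μ,μ',t) and the set P(μ,μ',t) of functions f from Frobenius-orbits [a] to partitions such that #[a] divides every part of f([a]), ⋃_{[a]} f([a]) = μ', and f([a]) ⊆ μ[t,a] for every [a]. -/
open scoped Classical

private lemma stmt14powfix {M : Type*} [Monoid M] {a : M} {N : ℕ} (h : a ^ N = a) :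
    ∀ c : ℕ, a ^ N ^ c = a := by
  intro c
  induction c with
  | zero => simp
  | succ c ih => rw [pow_succ, pow_mul, ih, h]

private lemma stmt14powfix_mul {M : Type*} [Monoid M] {a : M} {q d : ℕ} (h : a ^ q ^ d = a) :
    ∀ c : ℕ, a ^ q ^ (c * d) = a := by
  intro c; rw [mul_comm, pow_mul]; exact stmt14powfix h c

private lemma stmt14rel_trans {M : Type*} [Monoid M] {q : ℕ} {a b c : M}
    (h1 : ∃ m : ℕ, b = a ^ q ^ m) (h2 : ∃ m : ℕ, c = b ^ q ^ m) :
    ∃ m : ℕ, c = a ^ q ^ m := by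
  obtain ⟨m, rfl⟩ := h1; obtain ⟨m', rfl⟩ := h2
  exact ⟨m + m', by rw [← pow_mul, ← pow_add]⟩

private lemma stmt14rel_symm {M : Type*} [Monoid M] {q : ℕ} {a b : M}
    (ha : ∃ N : ℕ, 0 < N ∧ a ^ q ^ N = a) (h : ∃ m : ℕ, b = a ^ q ^ m) :
    ∃ m : ℕ, a = b ^ q ^ m := by
  obtain ⟨m, rfl⟩ := h
  obtain ⟨N, hN, haN⟩ := ha
  refine ⟨m * N - m, ?_⟩
  rw [← pow_mul, ← pow_add]
  have hle : m ≤ m * N := Nat.le_mul_of_pos_right m hN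
  have heq : m + (m * N - m) = m * N := by omega
  rw [heq]
  exact (stmt14powfix_mul haN m).symm

private lemma stmt14orbit_eq {M : Type*} [Monoid M] {q : ℕ} {a b : M}
    (ha : ∃ N : ℕ, 0 < N ∧ a ^ q ^ N = a) (h : ∃ m : ℕ, b = a ^ q ^ m) :
    {y : M | ∃ m : ℕ, y = a ^ q ^ m} = {y : M | ∃ m : ℕ, y = b ^ q ^ m} := by
  ext y
  simp only [Set.mem_setOf_eq]
  constructor
  · intro hy; exact stmt14rel_trans (stmt14rel_symm ha h) hy
  · intro hy; exact stmt14rel_trans h hy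

private lemma stmt14ncard_orbit_dvd {M : Type*} [Monoid M] {q : ℕ} {a : M} {N : ℕ}
    (hN : 0 < N) (ha : a ^ q ^ N = a) :
    Set.ncard {y : M | ∃ m : ℕ, y = a ^ q ^ m} ∣ N := by
  classical
  have hex : ∃ d, 0 < d ∧ a ^ q ^ d = a := ⟨N, hN, ha⟩
  set d := Nat.find hex with hd
  obtain ⟨hdpos, hda⟩ : 0 < d ∧ a ^ q ^ d = a := Nat.find_spec hex
  have hmod : ∀ m : ℕ, a ^ q ^ m = a ^ q ^ (m % d) := by
    intro m
    conv_lhs => rw [← Nat.div_add_mod m d]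
    rw [mul_comm, pow_add, pow_mul, stmt14powfix_mul hda]
  have hdvd : d ∣ N := by
    have h1 : a ^ q ^ (N % d) = a := by rw [← hmod N]; exact ha
    rcases Nat.eq_zero_or_pos (N % d) with h0 | hpos'
    · exact Nat.dvd_of_mod_eq_zero h0
    · exact absurd (⟨hpos', h1⟩ : 0 < N % d ∧ a ^ q ^ (N % d) = a)
        (Nat.find_min hex (Nat.mod_lt N hdpos))
  have hset : {y : M | ∃ m : ℕ, y = a ^ q ^ m}
      = ↑((Finset.range d).image fun m => a ^ q ^ m) := by
    ext y
    simp only [Set.mem_setOf_eq, Finset.coe_image, Set.mem_image, Finset.mem_coe,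
      Finset.mem_range]
    constructor
    · rintro ⟨m, rfl⟩; exact ⟨m % d, Nat.mod_lt m hdpos, (hmod m).symm⟩
    · rintro ⟨m, _, rfl⟩; exact ⟨m, rfl⟩
  have key : ∀ i j, i < d → j < d → i ≤ j → a ^ q ^ i = a ^ q ^ j → i = j := by
    intro i j hi hj hij heq
    by_contra hne
    have hlt : i < j := lt_of_le_of_ne hij hne
    have h2 : a ^ q ^ (i + (d - j)) = a := by
      have h3 : (a ^ q ^ i) ^ q ^ (d - j) = (a ^ q ^ j) ^ q ^ (d - j) := by rw [heq]
      rw [← pow_mul, ← pow_add, ← pow_mul, ← pow_add] at h3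
      have h4 : j + (d - j) = d := by omega
      rw [h3, h4, hda]
    exact absurd (⟨by omega, h2⟩ : 0 < i + (d - j) ∧ a ^ q ^ (i + (d - j)) = a)
      (Nat.find_min hex (show i + (d - j) < d by omega))
  have hinj : Set.InjOn (fun m => a ^ q ^ m) (Finset.range d) := by
    intro i hi j hj heq
    simp only [Finset.coe_range, Set.mem_Iio] at hi hj
    rcases le_total i j with h | h
    · exact key i j hi hj h heq
    · exact (key j i hj hi h heq.symm).symm
  rw [hset, Set.ncard_coe_finset, Finset.card_image_of_injOn hinj, Finset.card_range]
  exact hdvd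

private lemma stmt14torsion (p e : ℕ) [Fact p.Prime]
    (u : (AlgebraicClosure (GaloisField p e))ˣ) :
    ∃ M : ℕ, 0 < M ∧ u ^ (p ^ e) ^ M = u := by
  set K := AlgebraicClosure (GaloisField p e)
  set F := GaloisField p e
  have hx : IsIntegral F (u : K) := Algebra.IsIntegral.isIntegral _
  set L := IntermediateField.adjoin F {(u : K)}
  have : FiniteDimensional F L := IntermediateField.adjoin.finiteDimensional hx
  have : Finite L := Module.finite_of_finite F
  have : Fintype L := Fintype.ofFinite L
  have hchar : CharP L p := charP_of_injective_algebraMap (algebraMap F L).injective p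
  obtain ⟨n, hp, hcard⟩ := FiniteField.card L p
  set x : L := ⟨(u : K), IntermediateField.mem_adjoin_simple_self F (u : K)⟩
  have hxq : x ^ p ^ (n : ℕ) = x := by
    rw [← hcard]; exact FiniteField.pow_card x
  have hKq : (u : K) ^ p ^ (n : ℕ) = (u : K) := by
    have := congrArg (algebraMap L K) hxq
    simpa [x] using this
  have hKe : (u : K) ^ (p ^ e) ^ (n : ℕ) = (u : K) := by
    have heq : (p ^ e) ^ (n : ℕ) = (p ^ (n : ℕ)) ^ e := by ring
    rw [heq]
    exact stmt14powfix hKq e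
  refine ⟨n, n.2, Units.ext ?_⟩
  simpa using hKe

private lemma stmt14exists_of_le_map {β γ : Type*} (f : β → γ) :
    ∀ (s : Multiset γ) (t : Multiset β), s ≤ t.map f → ∃ u ≤ t, s = u.map f := by
  intro s
  induction s using Multiset.induction with
  | empty => intro t _; exact ⟨0, Multiset.zero_le _, rfl⟩
  | cons a s ih =>
    intro t hle
    have ha : a ∈ t.map f := Multiset.mem_of_le hle (Multiset.mem_cons_self a s)
    obtain ⟨b, hb, hfb⟩ := Multiset.mem_map.mp ha
    have ht' : t = b ::ₘ t.erase b := (Multiset.cons_erase hb).symm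
    have h2 : a ::ₘ s ≤ a ::ₘ (t.erase b).map f := by
      rw [ht'] at hle; simpa [hfb] using hle
    have hs : s ≤ (t.erase b).map f := (Multiset.cons_le_cons_iff a).mp h2
    obtain ⟨u, hu, hsu⟩ := ih (t.erase b) hs
    exact ⟨b ::ₘ u, by rw [ht']; exact Multiset.cons_le_cons b hu, by simp [hsu, hfb]⟩

private lemma stmt14align {α β γ : Type*} (f : α → γ) (g : β → γ) :
    ∀ (s : Multiset α) (t : Multiset β), s.map f = t.map g →
      ∃ (l1 : List α) (l2 : List β), (l1 : Multiset α) = s ∧ (l2 : Multiset β) = t ∧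
        List.Forall₂ (fun a b => f a = g b) l1 l2 := by
  intro s
  induction s using Multiset.induction with
  | empty =>
    intro t h
    have ht : t = 0 := by
      have h0 : t.map g = 0 := by simpa using h.symm
      exact Multiset.map_eq_zero.mp h0
    exact ⟨[], [], rfl, by simp [ht], List.Forall₂.nil⟩
  | cons a s ih =>
    intro t h
    have ha : f a ∈ t.map g := by
      rw [← h]; simp
    obtain ⟨b, hb, hgb⟩ := Multiset.mem_map.mp ha
    have ht' : t = b ::ₘ t.erase b := (Multiset.cons_erase hb).symm
    have h2 : s.map f = (t.erase b).map g := by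
      rw [ht', Multiset.map_cons, Multiset.map_cons, hgb] at h
      exact (Multiset.cons_inj_right (f a)).mp h
    obtain ⟨l1, l2, hl1, hl2, hall⟩ := ih (t.erase b) h2
    exact ⟨a :: l1, b :: l2, by rw [← hl1]; rfl, by rw [ht', ← hl2]; rfl,
      List.Forall₂.cons hgb.symm hall⟩

/-- Concrete model (cf. `stmt13`) of Lemma 3.1/3.2 of the paper: fix a torus `T_μ` of `GL_n`
of type `μ`, a subset `A` of indices singling out the subtorus `T_{μ'}` (so `μ' = μ|_A` with
`μ = μ' ∪ μ''`), and a semisimple `t ∈ T_μ^F`.  Let `D(μ,μ',t)` be the set of restrictions to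
`T_{μ'}` of `W_{GL_n}(T_μ)^F`-conjugates of `t`, and let `r` be the conjugacy relation on `D`
under `W_{GL_{|μ'|}}(T_{μ'})^F`.  Let `P(μ,μ',t)` be the set of assignments of partitions to
Frobenius orbits `[a]` — encoded as sub-multisets `ν` of the multiset of pairs
`(μ i, [t i])` — with `#[a]` dividing every part assigned to `[a]`, union of the values equal
to `μ'`, and value at `[a]` contained in `μ[t,a]`.  Then the `W_{GL_{|μ'|}}(T_{μ'})^F`-classes
in `D(μ,μ',t)` are in bijection with `P(μ,μ',t)`. -/
theorem stmt14 (p e k : ℕ) [Fact p.Prime] (he : 0 < e)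
    (μ : Fin k → ℕ) (hμ : ∀ i, 0 < μ i)
    (A : Finset (Fin k))
    (t : Fin k → (AlgebraicClosure (GaloisField p e))ˣ)
    (ht : ∀ i, t i ^ (p ^ e) ^ μ i = t i)
    (relK : (AlgebraicClosure (GaloisField p e))ˣ → (AlgebraicClosure (GaloisField p e))ˣ → Prop)
    (hrelK : relK = fun a b => ∃ m : ℕ, b = a ^ (p ^ e) ^ m)
    (D : Set ((i : A) → (AlgebraicClosure (GaloisField p e))ˣ))
    (hD : D = {t' | ∃ g : A → Fin k, Function.Injective g ∧ (∀ i, μ (g i) = μ i.1) ∧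
        ∀ i, ∃ m : ℕ, t' i = t (g i) ^ (p ^ e) ^ m})
    (r : D → D → Prop)
    (hr : r = fun t' t'' => ∃ π : Equiv.Perm A, (∀ i : A, μ (π i).1 = μ i.1) ∧
        ∀ i, ∃ m : ℕ, (t''.1) i = (t'.1) (π i) ^ (p ^ e) ^ m) :
    Nonempty (Quot r ≃
      {ν : Multiset (ℕ × Quot relK) //
        ν ≤ Finset.univ.val.map (fun i => ((μ i, Quot.mk relK (t i)) : ℕ × Quot relK)) ∧
        ν.map Prod.fst = A.val.map μ ∧
        ∀ pr ∈ ν, ∀ a : (AlgebraicClosure (GaloisField p e))ˣ, Quot.mk relK a = pr.2 →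
          Set.ncard {y : (AlgebraicClosure (GaloisField p e))ˣ |
              ∃ m : ℕ, y = a ^ (p ^ e) ^ m} ∣ pr.1}) := by
  classical
  set K := AlgebraicClosure (GaloisField p e) with hK
  have tor : ∀ u : Kˣ, ∃ M : ℕ, 0 < M ∧ u ^ (p ^ e) ^ M = u := stmt14torsion p e
  -- Quot.mk equality is the relation itself
  have hequiv : Equivalence relK := by
    rw [hrelK]
    exact ⟨fun a => ⟨0, by simp⟩, fun h => stmt14rel_symm (tor _) h,
      fun h1 h2 => stmt14rel_trans h1 h2⟩
  have hQ : ∀ a b : Kˣ, Quot.mk relK a = Quot.mk relK b ↔ relK a b := by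
    intro a b
    exact Quot.eq.trans hequiv.eqvGen_iff
  -- the invariant map
  let f0 : Fin k → ℕ × Quot relK := fun i => (μ i, Quot.mk relK (t i))
  let Φ : D → Multiset (ℕ × Quot relK) :=
    fun t' => A.attach.val.map (fun i => (μ i.1, Quot.mk relK (t'.1 i)))
  -- Φ lands in the subtype
  have hmem : ∀ t' : D, (Φ t') ≤ Finset.univ.val.map f0 ∧ (Φ t').map Prod.fst = A.val.map μ ∧
      ∀ pr ∈ Φ t', ∀ a : Kˣ, Quot.mk relK a = pr.2 →
        Set.ncard {y : Kˣ | ∃ m : ℕ, y = a ^ (p ^ e) ^ m} ∣ pr.1 := by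
    intro t'
    have ht2 : ∃ g : A → Fin k, Function.Injective g ∧ (∀ i, μ (g i) = μ i.1) ∧
        ∀ i, ∃ m : ℕ, t'.1 i = t (g i) ^ (p ^ e) ^ m := by
      have h0 : t'.1 ∈ {t' | ∃ g : A → Fin k, Function.Injective g ∧ (∀ i, μ (g i) = μ i.1) ∧
          ∀ i, ∃ m : ℕ, t' i = t (g i) ^ (p ^ e) ^ m} := by rw [← hD]; exact t'.2
      exact h0
    obtain ⟨g, hginj, hgμ, hgm⟩ := ht2
    have hquot : ∀ i : A, Quot.mk relK (t'.1 i) = Quot.mk relK (t (g i)) := by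
      intro i
      obtain ⟨m, hm⟩ := hgm i
      exact (Quot.sound (show relK (t (g i)) (t'.1 i) by rw [hrelK]; exact ⟨m, hm⟩)).symm
    have hΦg : Φ t' = (A.attach.val.map g).map f0 := by
      show A.attach.val.map _ = _
      rw [Multiset.map_map]
      exact Multiset.map_congr rfl (fun i _ => by
        show (μ i.1, Quot.mk relK (t'.1 i)) = f0 (g i)
        show (μ i.1, Quot.mk relK (t'.1 i)) = (μ (g i), Quot.mk relK (t (g i)))
        rw [hquot i, hgμ i])
    refine ⟨?_, ?_, ?_⟩
    · rw [hΦg]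
      apply Multiset.map_le_map
      have hnodup : (A.attach.val.map g).Nodup := (Finset.nodup _).map hginj
      rw [Multiset.le_iff_subset hnodup]
      intro x _
      exact Finset.mem_val.mpr (Finset.mem_univ x)
    · show (A.attach.val.map _).map Prod.fst = _
      rw [Multiset.map_map]
      have hcomp : (Prod.fst ∘ fun i : A => (μ i.1, Quot.mk relK (t'.1 i)))
          = fun i : A => μ i.1 := rfl
      rw [hcomp, Finset.attach_val]
      exact Multiset.attach_map_val' A.val μ
    · intro pr hpr a ha
      obtain ⟨i, _, rfl⟩ := Multiset.mem_map.mp hpr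
      have h1 : relK a (t (g i)) := (hQ a _).mp (ha.trans (hquot i))
      rw [hrelK] at h1
      have hSeq := stmt14orbit_eq (tor a) h1
      show Set.ncard _ ∣ μ i.1
      rw [hSeq, ← hgμ i]
      exact stmt14ncard_orbit_dvd (hμ (g i)) (ht (g i))
  -- Φ is r-invariant
  have hinv : ∀ t' t'' : D, r t' t'' → Φ t' = Φ t'' := by
    intro t' t'' hrel
    rw [hr] at hrel
    obtain ⟨π, hπμ, hπm⟩ := hrel
    have hquot : ∀ i : A, Quot.mk relK (t''.1 i) = Quot.mk relK (t'.1 (π i)) := by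
      intro i
      obtain ⟨m, hm⟩ := hπm i
      exact (Quot.sound (show relK (t'.1 (π i)) (t''.1 i) by rw [hrelK]; exact ⟨m, hm⟩)).symm
    have step1 : A.attach.val.map (fun i : A => (μ i.1, Quot.mk relK (t''.1 i)))
        = A.attach.val.map ((fun i : A => (μ i.1, Quot.mk relK (t'.1 i))) ∘ ⇑π) :=
      Multiset.map_congr rfl (fun i _ => by
        show (μ i.1, Quot.mk relK (t''.1 i)) = (μ (π i).1, Quot.mk relK (t'.1 (π i)))
        rw [hquot i, hπμ i])
    have step2 : A.attach.val.map (⇑π) = A.attach.val := by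
      calc A.attach.val.map ⇑π = (Finset.univ : Finset A).val.map ⇑π := by
            rw [Finset.univ_eq_attach]
        _ = (Finset.univ.map π.toEmbedding).val := rfl
        _ = A.attach.val := by rw [Finset.map_univ_equiv, Finset.univ_eq_attach]
    show A.attach.val.map _ = A.attach.val.map _
    exact (step1.trans (by rw [← Multiset.map_map, step2])).symm
  -- Φ separates r-classes
  have hinjΦ : ∀ t' t'' : D, Φ t' = Φ t'' → r t' t'' := by
    intro t' t'' hΦeq
    obtain ⟨l1, l2, hl1, hl2, hall⟩ := stmt14align
      (fun i : A => (μ i.1, Quot.mk relK (t'.1 i)))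
      (fun i : A => (μ i.1, Quot.mk relK (t''.1 i))) A.attach.val A.attach.val hΦeq
    have hnd1 : l1.Nodup := by rw [← Multiset.coe_nodup, hl1]; exact Finset.nodup _
    have hmem2 : ∀ i : A, i ∈ l2 := fun i => by
      rw [← Multiset.mem_coe, hl2]; exact Finset.mem_attach A i
    have hlen := hall.length_eq
    have hidx : ∀ i : A, List.idxOf i l2 < l2.length :=
      fun i => List.idxOf_lt_length_iff.mpr (hmem2 i)
    let π0 : A → A := fun i => l1.get ⟨List.idxOf i l2, by rw [hlen]; exact hidx i⟩
    have hget := (List.forall₂_iff_get.mp hall).2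
    have hpair : ∀ i : A, (μ (π0 i).1, Quot.mk relK (t'.1 (π0 i)))
        = (μ i.1, Quot.mk relK (t''.1 i)) := by
      intro i
      have h := hget (List.idxOf i l2) (by rw [hlen]; exact hidx i) (hidx i)
      rwa [List.idxOf_get (hidx i)] at h
    have hπ0inj : Function.Injective π0 := by
      intro i i' h
      have h2 := List.nodup_iff_injective_get.mp hnd1 h
      have h3 : List.idxOf i l2 = List.idxOf i' l2 := congrArg Fin.val h2
      have h4 : l2.get ⟨List.idxOf i l2, hidx i⟩ = l2.get ⟨List.idxOf i' l2, hidx i'⟩ := by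
        congr 1
        exact Fin.ext h3
      rwa [List.idxOf_get (hidx i), List.idxOf_get (hidx i')] at h4
    let π : Equiv.Perm A := Equiv.ofBijective π0 (Finite.injective_iff_bijective.mp hπ0inj)
    rw [hr]
    refine ⟨π, ?_, ?_⟩
    · intro i
      exact congrArg Prod.fst (hpair i)
    · intro i
      have h5 : Quot.mk relK (t'.1 (π i)) = Quot.mk relK (t''.1 i) :=
        congrArg Prod.snd (hpair i)
      have h6 := (hQ _ _).mp h5
      rw [hrelK] at h6
      exact h6
  -- Φ is surjective onto the subtype
  have hsurj : ∀ ν : Multiset (ℕ × Quot relK), ν ≤ Finset.univ.val.map f0 →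
      ν.map Prod.fst = A.val.map μ → ∃ t'el : D, Φ t'el = ν := by
    intro ν hν1 hν2
    obtain ⟨u, hu, rfl⟩ := stmt14exists_of_le_map f0 ν Finset.univ.val hν1
    have hν2' : u.map μ = A.val.map μ := by
      rw [Multiset.map_map] at hν2
      exact hν2
    obtain ⟨lB, lA, hlB, hlA, hall⟩ := stmt14align μ μ u A.val hν2'
    have hndB : lB.Nodup := by
      rw [← Multiset.coe_nodup, hlB]
      exact Multiset.nodup_of_le hu (Finset.nodup _)
    have hmemA : ∀ i : A, i.1 ∈ lA := fun i => by
      rw [← Multiset.mem_coe, hlA]; exact i.2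
    have hlen := hall.length_eq
    have hidxlt : ∀ i : A, List.idxOf i.1 lA < lA.length :=
      fun i => List.idxOf_lt_length_iff.mpr (hmemA i)
    let idx : A → Fin lB.length := fun i => ⟨List.idxOf i.1 lA, by rw [hlen]; exact hidxlt i⟩
    let g : A → Fin k := fun i => lB.get (idx i)
    have hidxinj : Function.Injective idx := by
      intro i i' h
      have h3 : List.idxOf i.1 lA = List.idxOf i'.1 lA := congrArg Fin.val h
      have h4 : lA.get ⟨List.idxOf i.1 lA, hidxlt i⟩
          = lA.get ⟨List.idxOf i'.1 lA, hidxlt i'⟩ := by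
        congr 1
        exact Fin.ext h3
      rw [List.idxOf_get (hidxlt i), List.idxOf_get (hidxlt i')] at h4
      exact Subtype.ext h4
    have hginj : Function.Injective g := by
      intro i i' h
      exact hidxinj (List.nodup_iff_injective_get.mp hndB h)
    have hget := (List.forall₂_iff_get.mp hall).2
    have hgμ : ∀ i : A, μ (g i) = μ i.1 := by
      intro i
      have h := hget (List.idxOf i.1 lA) (by rw [hlen]; exact hidxlt i) (hidxlt i)
      rwa [List.idxOf_get (hidxlt i)] at h
    refine ⟨⟨fun i => t (g i), ?_⟩, ?_⟩
    · rw [hD]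
      exact ⟨g, hginj, hgμ, fun i => ⟨0, by simp⟩⟩
    · show A.attach.val.map (fun i => (μ i.1, Quot.mk relK (t (g i)))) = u.map f0
      have e1 : (fun i : A => (μ i.1, Quot.mk relK (t (g i)))) = f0 ∘ g := by
        funext i
        show (μ i.1, Quot.mk relK (t (g i))) = (μ (g i), Quot.mk relK (t (g i)))
        rw [hgμ i]
      rw [e1, ← Multiset.map_map]
      have himgnd : (A.attach.val.map idx).Nodup := (Finset.nodup _).map hidxinj
      have hcardeq : (A.attach.val.map idx).card = Fintype.card (Fin lB.length) := by
        rw [Multiset.card_map, Fintype.card_fin]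
        have c1 : A.attach.val.card = A.val.card := Finset.card_attach
        have c2 : lA.length = A.val.card := by
          rw [← Multiset.coe_card, hlA]
        rw [c1, ← c2, hlen]
      have hidximg : A.attach.val.map idx = (Finset.univ : Finset (Fin lB.length)).val := by
        have := Finset.eq_univ_of_card (⟨A.attach.val.map idx, himgnd⟩ : Finset (Fin lB.length))
          hcardeq
        exact congrArg Finset.val this
      have himg : A.attach.val.map g = (lB : Multiset (Fin k)) := by
        show A.attach.val.map (lB.get ∘ idx) = _
        rw [← Multiset.map_map, hidximg, Fin.univ_def]
        show Multiset.map lB.get ↑(List.finRange lB.length) = _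
        rw [Multiset.map_coe, List.map_get_finRange]
      rw [himg, hlB]
  -- assemble the bijection
  let Φ' : D → {ν : Multiset (ℕ × Quot relK) //
      ν ≤ Finset.univ.val.map (fun i => ((μ i, Quot.mk relK (t i)) : ℕ × Quot relK)) ∧
      ν.map Prod.fst = A.val.map μ ∧
      ∀ pr ∈ ν, ∀ a : Kˣ, Quot.mk relK a = pr.2 →
        Set.ncard {y : Kˣ | ∃ m : ℕ, y = a ^ (p ^ e) ^ m} ∣ pr.1} :=
    fun t' => ⟨Φ t', hmem t'⟩
  let F : Quot r → _ := Quot.lift Φ' (fun a b hab => Subtype.ext (hinv a b hab))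
  refine ⟨Equiv.ofBijective F ⟨?_, ?_⟩⟩
  · intro x y
    induction x using Quot.ind with | _ a =>
    induction y using Quot.ind with | _ b =>
    intro h
    have h2 : Φ' a = Φ' b := h
    have h3 : Φ a = Φ b := congrArg Subtype.val h2
    exact Quot.sound (hinjΦ a b h3)
  · rintro ⟨ν, hν1, hν2, _⟩
    obtain ⟨t'el, hΦel⟩ := hsurj ν hν1 hν2
    refine ⟨Quot.mk r t'el, ?_⟩
    show Φ' t'el = _
    exact Subtype.ext hΦel
end

section
/- With notation as in the torus analysis for GL_n: fix μ = μ' ∪ μ'', t ∈ T_μ^F semisimple and t' ∈ T_{μ'}^F. Let M(μ,μ',t,t') = {w ∈ W_{GL_n}(T_μ)^F : (ʷt)|_{T_{μ'}} = t'}. Then #M(μ,μ',t,t') = |W_{GL_m}(T_{μ'}, t')^F| · |W_{GL_{n-m}}(T_{μ''})^F| · ∏_{[a]} C_{μ[t,a], μ'[t',a]} if t' ∈ D(μ,μ',t), and #M(μ,μ',t,t') = 0 otherwise, where W_G(T,t) = {w ∈ W_G(T) : ʷt = t}. -/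
open scoped Classical

/-- exponent reduction for torsion elements -/
lemma pow_q_mod {K : Type*} [Monoid K] (x : K) (q ν : ℕ) (hx : x ^ q ^ ν = x) :
    ∀ a, x ^ q ^ a = x ^ q ^ (a % ν) := by
  intro a
  conv_lhs => rw [← Nat.div_add_mod a ν]
  generalize a / ν = c
  induction c with
  | zero => simp
  | succ c ih =>
      have h : ν * (c+1) + a % ν = ν + (ν * c + a % ν) := by ring
      rw [h, pow_add, pow_mul, hx, ih]

lemma pow_q_congr {K : Type*} [Monoid K] (x : K) (q ν : ℕ) (hx : x ^ q ^ ν = x)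
    {a b : ℕ} (h : a % ν = b % ν) : x ^ q ^ a = x ^ q ^ b := by
  rw [pow_q_mod x q ν hx a, pow_q_mod x q ν hx b, h]

/-- from a common power relation and torsion on `y`, get a directed power relation -/
lemma directed_of_common {K : Type*} [Monoid K] (x y : K) (q β a b : ℕ)
    (hy : y ^ q ^ β = y) (hβ : 0 < β) (h : x ^ q ^ a = y ^ q ^ b) :
    ∃ m : ℕ, y = x ^ q ^ m := by
  refine ⟨a + (β - b % β), ?_⟩
  have h1 : (b + (β - b % β)) % β = 0 := by
    have h2 := Nat.div_add_mod b β
    have h3 := Nat.mod_lt b hβ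
    have h4 : b + (β - b % β) = β * (b / β) + β := by omega
    have h5 : β * (b / β) + β = β * (b / β + 1) := by ring
    rw [h4, h5, Nat.mul_mod_right]
  calc y = y ^ q ^ (0:ℕ) := by simp
  _ = y ^ q ^ (b + (β - b % β)) := by
        refine (pow_q_congr y q β hy ?_)
        simp [h1]
  _ = (y ^ q ^ b) ^ q ^ (β - b % β) := by rw [← pow_mul, ← pow_add]
  _ = (x ^ q ^ a) ^ q ^ (β - b % β) := by rw [h]
  _ = x ^ q ^ (a + (β - b % β)) := by rw [← pow_mul, ← pow_add]

lemma eqvgen_common {K : Type*} [Monoid K] (q : ℕ) {x y : K}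
    (h : Relation.EqvGen (fun a b => ∃ m : ℕ, b = a ^ q ^ m) x y) :
    ∃ a b : ℕ, x ^ q ^ a = y ^ q ^ b := by
  induction h with
  | rel x y hxy => obtain ⟨m, rfl⟩ := hxy; exact ⟨m, 0, by simp⟩
  | refl x => exact ⟨0, 0, rfl⟩
  | symm x y _ ih => obtain ⟨a, b, hab⟩ := ih; exact ⟨b, a, hab.symm⟩
  | trans x y z _ _ ih1 ih2 =>
      obtain ⟨a, b, hab⟩ := ih1
      obtain ⟨c, d, hcd⟩ := ih2
      refine ⟨a + c, d + b, ?_⟩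
      calc x ^ q ^ (a + c) = (x ^ q ^ a) ^ q ^ c := by rw [← pow_mul, ← pow_add]
      _ = (y ^ q ^ b) ^ q ^ c := by rw [hab]
      _ = (y ^ q ^ c) ^ q ^ b := by rw [← pow_mul, ← pow_mul, mul_comm]
      _ = (z ^ q ^ d) ^ q ^ b := by rw [hcd]
      _ = z ^ q ^ (d + b) := by rw [← pow_mul, ← pow_add]

/-- quotient equality plus torsion gives a directed witness -/
lemma directed_of_quot {K : Type*} [Monoid K] (q : ℕ) {x y : K} {β : ℕ}
    (hy : y ^ q ^ β = y) (hβ : 0 < β)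
    (h : Quot.mk (fun a b => ∃ m : ℕ, b = a ^ q ^ m) x
       = Quot.mk (fun a b => ∃ m : ℕ, b = a ^ q ^ m) y) :
    ∃ m : ℕ, y = x ^ q ^ m := by
  obtain ⟨a, b, hab⟩ := eqvgen_common q (Quot.eq.1 h)
  exact directed_of_common x y q β a b hy hβ hab

/-- class preserving bijection between finsets with equal multisets of classes -/
lemma exists_classBij {α β C : Type*} [DecidableEq α] [DecidableEq β] [DecidableEq C]
    (F : α → C) (G : β → C) :
    ∀ (sa : Finset α) (sb : Finset β), sa.val.map F = sb.val.map G →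
      ∃ φ : ↥sa → β, Function.Injective φ ∧ (∀ x, φ x ∈ sb) ∧
        (∀ x, G (φ x) = F x.1) ∧ ∀ y ∈ sb, ∃ x, φ x = y := by
  intro sa
  induction sa using Finset.strongInduction with
  | _ sa ih =>
    rcases sa.eq_empty_or_nonempty with rfl | ⟨x, hx⟩
    · intro sb h
      have hsb : sb = ∅ := by
        have := congrArg Multiset.card h
        simp only [Finset.empty_val, Multiset.map_zero, Multiset.card_zero, Multiset.card_map] at this
        exact Finset.card_eq_zero.1 this.symm
      subst hsb
      exact ⟨fun z => (Finset.notMem_empty _ z.2).elim,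
        fun {z w} _ => (Finset.notMem_empty _ z.2).elim,
        fun z => (Finset.notMem_empty _ z.2).elim,
        fun z => (Finset.notMem_empty _ z.2).elim,
        fun y hy => (Finset.notMem_empty _ hy).elim⟩
    · intro sb h
      have hFx : F x ∈ sb.val.map G := by
        rw [← h]; exact Multiset.mem_map_of_mem F (by simpa using hx)
      obtain ⟨y, hy, hGy⟩ := Multiset.mem_map.1 hFx
      have hyb : y ∈ sb := hy
      have hrec : (sa.erase x).val.map F = (sb.erase y).val.map G := by
        have h1 : sa.val = x ::ₘ (sa.erase x).val := by
          rw [Finset.erase_val]; exact (Multiset.cons_erase (by simpa using hx)).symm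
        have h2 : sb.val = y ::ₘ (sb.erase y).val := by
          rw [Finset.erase_val]; exact (Multiset.cons_erase (by simpa using hyb)).symm
        rw [h1, h2, Multiset.map_cons, Multiset.map_cons, hGy] at h
        exact (Multiset.cons_inj_right _).1 h
      obtain ⟨φ', hinj', hmem', hcl', hsurj'⟩ := ih (sa.erase x) (Finset.erase_ssubset hx) (sb.erase y) hrec
      refine ⟨fun z => if hz : z.1 = x then y else φ' ⟨z.1, Finset.mem_erase.2 ⟨hz, z.2⟩⟩, ?_, ?_, ?_, ?_⟩
      · intro z w hzw
        by_cases hz : z.1 = x <;> by_cases hw : w.1 = x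
        · exact Subtype.ext (hz.trans hw.symm)
        · simp only [dif_pos hz, dif_neg hw] at hzw
          exact absurd hzw.symm (Finset.ne_of_mem_erase (hmem' _))
        · simp only [dif_neg hz, dif_pos hw] at hzw
          exact absurd hzw (Finset.ne_of_mem_erase (hmem' _))
        · simp only [dif_neg hz, dif_neg hw] at hzw
          exact Subtype.ext (Subtype.mk_eq_mk.mp (hinj' hzw))
      · intro z
        by_cases hz : z.1 = x
        · simpa [dif_pos hz] using hyb
        · simpa [dif_neg hz] using Finset.mem_of_mem_erase (hmem' _)
      · intro z
        by_cases hz : z.1 = x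
        · simp only [dif_pos hz]; rw [hGy, hz]
        · simpa [dif_neg hz] using hcl' _
      · intro y₀ hy₀
        by_cases hyy : y₀ = y
        · exact ⟨⟨x, hx⟩, by simp [hyy]⟩
        · obtain ⟨z', hz'⟩ := hsurj' y₀ (Finset.mem_erase.2 ⟨hyy, hy₀⟩)
          have hzx : z'.1 ≠ x := (Finset.mem_erase.1 z'.2).1
          refine ⟨⟨z'.1, Finset.mem_of_mem_erase z'.2⟩, ?_⟩
          simp only [dif_neg hzx]
          convert hz' using 2

theorem Equiv.Perm.apply_inv_self {α : Type*} (f : Equiv.Perm α) (x : α) : f (f⁻¹ x) = x :=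
  f.apply_symm_apply x

theorem Equiv.Perm.inv_apply_self {α : Type*} (f : Equiv.Perm α) (x : α) : f⁻¹ (f x) = x :=
  f.symm_apply_apply x

-- assumed available from aux1:
lemma pow_q_mod' {K : Type*} [Monoid K] (x : K) (q ν : ℕ) (hx : x ^ q ^ ν = x) :
    ∀ a, x ^ q ^ a = x ^ q ^ (a % ν) := by
  intro a
  conv_lhs => rw [← Nat.div_add_mod a ν]
  generalize a / ν = c
  induction c with
  | zero => simp
  | succ c ih =>
      have h : ν * (c+1) + a % ν = ν + (ν * c + a % ν) := by ring
      rw [h, pow_add, pow_mul, hx, ih]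

lemma pow_pow_add {K : Type*} [Monoid K] (x : K) (q a b : ℕ) :
    (x ^ q ^ a) ^ q ^ b = x ^ q ^ (a + b) := by
  rw [← pow_mul, ← pow_add]

lemma mod_h1 (m m₀ ν : ℕ) (h₀ : m₀ < ν) (hm : m < ν) : (m₀ + (m + ν - m₀) % ν) % ν = m := by
  rw [Nat.add_mod_mod]
  have e : m₀ + (m + ν - m₀) = m + ν := by omega
  rw [e, Nat.add_mod_right, Nat.mod_eq_of_lt hm]

lemma mod_h2 (m m₀ ν : ℕ) (h₀ : m₀ < ν) (hm : m < ν) : ((m + ν - m₀) % ν + m₀) % ν = m := by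
  rw [Nat.mod_add_mod]
  have e : m + ν - m₀ + m₀ = m + ν := by omega
  rw [e, Nat.add_mod_right, Nat.mod_eq_of_lt hm]

lemma mod_h3 (n m₀ ν : ℕ) (h₀ : m₀ < ν) (hn : n < ν) : ((n + m₀) % ν + ν - m₀) % ν = n := by
  have e : (n + m₀) % ν + ν - m₀ = (n + m₀) % ν + (ν - m₀) := by omega
  rw [e, Nat.mod_add_mod]
  have e2 : n + m₀ + (ν - m₀) = n + ν := by omega
  rw [e2, Nat.add_mod_right, Nat.mod_eq_of_lt hn]

lemma map_eq_attach_map {α C : Type*} (s : Finset α) (F : α → C) (F' : ↥s → C)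
    (h : ∀ x : ↥s, F x.1 = F' x) :
    s.val.map F = (Finset.univ : Finset ↥s).val.map F' := by
  rw [Finset.univ_eq_attach, Finset.attach_val]
  conv_lhs => rw [← Multiset.attach_map_val s.val, Multiset.map_map]
  apply Multiset.map_congr rfl
  intro x _
  exact h x

lemma card_fiber {α C : Type*} [DecidableEq C] (f : α → C) (s : Finset α) (pr : C) :
    (s.val.map f).count pr = (s.filter (fun j => f j = pr)).card := by
  rw [Multiset.count_map]
  rw [Finset.card_def, Finset.filter_val]
  congr 1
  apply Multiset.filter_congr
  intro x _
  constructor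
  · exact fun h => h.symm
  · exact fun h => h.symm

lemma stepB (p e : ℕ) [Fact p.Prime] (q k : ℕ) (μ : Fin k → ℕ)
    (A : Finset (Fin k)) (t : Fin k → (AlgebraicClosure (GaloisField p e))ˣ) (t' : ↥A → (AlgebraicClosure (GaloisField p e))ˣ)
    (ht' : ∀ i, t' i ^ q ^ μ i.1 = t' i) (hμ : ∀ i, 0 < μ i)
    (R : (AlgebraicClosure (GaloisField p e))ˣ → (AlgebraicClosure (GaloisField p e))ˣ → Prop) (hR : R = fun a b => ∃ m : ℕ, b = a ^ q ^ m)
    (hDD : ∃ g : ↥A → Fin k, Function.Injective g ∧ (∀ i, μ (g i) = μ i.1) ∧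
        ∀ i, ∃ m : ℕ, t' i = t (g i) ^ q ^ m) :
    ((Finset.univ : Finset (Finset (Fin k))).filter
        (fun s => s.val.map (fun j => ((μ j, Quot.mk R (t j)) : ℕ × Quot R)) =
          (Finset.univ : Finset ↥A).val.map (fun i => ((μ i.1, Quot.mk R (t' i)) : ℕ × Quot R)))).card =
      ∏ pr ∈ ((Finset.univ : Finset (Fin k)).val.map
          (fun j => ((μ j, Quot.mk R (t j)) : ℕ × Quot R))).toFinset,
        (((Finset.univ : Finset (Fin k)).val.map
            (fun j => ((μ j, Quot.mk R (t j)) : ℕ × Quot R))).count pr).choose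
          (((Finset.univ : Finset ↥A).val.map
            (fun i => ((μ i.1, Quot.mk R (t' i)) : ℕ × Quot R))).count pr) := by
  set f : Fin k → ℕ × Quot R := fun j => (μ j, Quot.mk R (t j)) with hf
  set f' : ↥A → ℕ × Quot R := fun i => (μ i.1, Quot.mk R (t' i)) with hf'
  set Mt : Multiset (ℕ × Quot R) := (Finset.univ : Finset (Fin k)).val.map f with hMt
  set Mt' : Multiset (ℕ × Quot R) := (Finset.univ : Finset ↥A).val.map f' with hMt'
  -- every class occurring in Mt' occurs in Mt
  have hsub : ∀ pr, Mt'.count pr ≠ 0 → pr ∈ Mt.toFinset := by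
    intro pr hpr
    obtain ⟨g, hginj, hgμ, hgpow⟩ := hDD
    have hmem : pr ∈ Mt' := Multiset.count_pos.1 (Nat.pos_of_ne_zero hpr)
    obtain ⟨i, _, hi⟩ := Multiset.mem_map.1 hmem
    obtain ⟨m, hm⟩ := hgpow i
    have hquot : Quot.mk R (t (g i)) = Quot.mk R (t' i) :=
      Quot.sound (by rw [hR]; exact ⟨m, hm⟩)
    have : pr = f (g i) := by
      rw [← hi]; simp only [hf, hf', hgμ i, hquot]
    rw [this]
    exact Multiset.mem_toFinset.2
      (Multiset.mem_map_of_mem f (Finset.mem_def.1 (Finset.mem_univ (g i))))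
  -- rewrite the RHS as the cardinality of a `Finset.pi`
  have hfib : ∀ pr, Mt.count pr = ((Finset.univ : Finset (Fin k)).filter (fun j => f j = pr)).card := by
    intro pr; rw [hMt]; convert card_fiber f (Finset.univ : Finset (Fin k)) pr using 2
  have hRHS : ∏ pr ∈ Mt.toFinset, (Mt.count pr).choose (Mt'.count pr) =
      (Mt.toFinset.pi (fun pr => ((Finset.univ : Finset (Fin k)).filter
        (fun j => f j = pr)).powersetCard (Mt'.count pr))).card := by
    rw [Finset.card_pi]
    apply Finset.prod_congr rfl
    intro pr _
    rw [Finset.card_powersetCard, hfib]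
  rw [hRHS]
  refine Finset.card_bij' (fun s _ => fun pr _ => s.filter (fun j => f j = pr))
    (fun φ hφ => Finset.univ.filter (fun x => x ∈ φ (f x)
      (Multiset.mem_toFinset.2 (Multiset.mem_map_of_mem f (Finset.mem_def.1 (Finset.mem_univ x))))))
    ?_ ?_ ?_ ?_
  · -- forward lands in pi set
    intro s hs
    have hs' : s.val.map f = Mt' := (Finset.mem_filter.1 hs).2
    rw [Finset.mem_pi]
    intro pr hpr
    rw [Finset.mem_powersetCard]
    constructor
    · intro x hx
      rw [Finset.mem_filter] at hx ⊢
      exact ⟨Finset.mem_univ _, hx.2⟩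
    · have := card_fiber f s pr
      rw [hs'] at this
      exact this.symm
  · -- backward lands in the admissible set
    intro φ hφ
    rw [Finset.mem_pi] at hφ
    rw [Finset.mem_filter]
    refine ⟨Finset.mem_univ _, ?_⟩
    set S := Finset.univ.filter (fun x => x ∈ φ (f x)
      (Multiset.mem_toFinset.2 (Multiset.mem_map_of_mem f (Finset.mem_def.1 (Finset.mem_univ x))))) with hS
    have key : ∀ pr (hpr : pr ∈ Mt.toFinset), S.filter (fun j => f j = pr) = φ pr hpr := by
      intro pr hpr
      ext x
      rw [Finset.mem_filter, hS, Finset.mem_filter]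
      constructor
      · rintro ⟨⟨_, hx1⟩, hx2⟩
        subst hx2
        exact hx1
      · intro hx
        have hsub2 := (Finset.mem_powersetCard.1 (hφ pr hpr)).1
        have hfx : f x = pr := (Finset.mem_filter.1 (hsub2 hx)).2
        subst hfx
        exact ⟨⟨Finset.mem_univ _, hx⟩, rfl⟩
    refine Multiset.ext.2 ?_
    intro pr
    rw [card_fiber f S pr]
    by_cases hpr : pr ∈ Mt.toFinset
    · rw [key pr hpr]
      exact ((Finset.mem_powersetCard.1 (hφ pr hpr)).2)
    · have h1 : Mt'.count pr = 0 := by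
        by_contra hne
        exact hpr (hsub pr hne)
      have h2 : S.filter (fun j => f j = pr) = ∅ := by
        rw [Finset.eq_empty_iff_forall_notMem]
        intro x hx
        have hfx : f x = pr := (Finset.mem_filter.1 hx).2
        exact hpr (hfx ▸ Multiset.mem_toFinset.2
          (Multiset.mem_map_of_mem f (Finset.mem_def.1 (Finset.mem_univ x))))
      rw [h2, h1, Finset.card_empty]
  · -- left inverse
    intro s hs
    dsimp only
    ext x
    rw [Finset.mem_filter]
    constructor
    · rintro ⟨_, hx⟩
      exact (Finset.mem_filter.1 hx).1
    · intro hx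
      exact ⟨Finset.mem_univ _, Finset.mem_filter.2 ⟨hx, rfl⟩⟩
  · -- right inverse
    intro φ hφ
    rw [Finset.mem_pi] at hφ
    funext pr hpr
    ext x
    rw [Finset.mem_filter, Finset.mem_filter]
    constructor
    · rintro ⟨⟨_, hx1⟩, hx2⟩
      subst hx2
      exact hx1
    · intro hx
      have hsub2 := (Finset.mem_powersetCard.1 (hφ pr hpr)).1
      have hfx : f x = pr := (Finset.mem_filter.1 (hsub2 hx)).2
      subst hfx
      exact ⟨⟨Finset.mem_univ _, hx⟩, rfl⟩

lemma baseData {K : Type*} [Monoid K] (q k : ℕ) (μ : Fin k → ℕ) (hμ : ∀ i, 0 < μ i)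
    (A : Finset (Fin k)) (t : Fin k → K) (t' : ↥A → K)
    (ht : ∀ i, t i ^ q ^ μ i = t i) (ht' : ∀ i, t' i ^ q ^ μ i.1 = t' i)
    (R : K → K → Prop) (hR : R = fun a b => ∃ m : ℕ, b = a ^ q ^ m) :
    ∀ s : Finset (Fin k), ∃ (g : ↥A → Fin k) (τ : ↥(Aᶜ : Finset (Fin k)) → Fin k) (m₀ : ↥A → ℕ),
      s.val.map (fun j => ((μ j, Quot.mk R (t j)) : ℕ × Quot R)) =
        (Finset.univ : Finset ↥A).val.map (fun i => ((μ i.1, Quot.mk R (t' i)) : ℕ × Quot R)) →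
      (Function.Injective g ∧ (∀ i, g i ∈ s) ∧ (∀ i, μ (g i) = μ i.1) ∧ (∀ y ∈ s, ∃ i, g i = y)) ∧
      ((∀ i, m₀ i < μ i.1) ∧ (∀ i, t' i = t (g i) ^ q ^ m₀ i)) ∧
      (Function.Injective τ ∧ (∀ x, τ x ∈ sᶜ) ∧ (∀ x, μ (τ x) = μ x.1) ∧ (∀ y ∈ sᶜ, ∃ x, τ x = y)) := by
  subst hR
  intro s
  set f : Fin k → ℕ × Quot _ := fun j => ((μ j, Quot.mk _ (t j)) : ℕ × Quot _) with hf
  set f' : ↥A → ℕ × Quot _ := fun i => ((μ i.1, Quot.mk _ (t' i)) : ℕ × Quot _) with hf'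
  by_cases hs : s.val.map f = (Finset.univ : Finset ↥A).val.map f'
  · obtain ⟨φ, hφinj, hφmem, hφcl, hφsurj⟩ :=
      exists_classBij f' f (Finset.univ : Finset ↥A) s hs.symm
    set g : ↥A → Fin k := fun i => φ ⟨i, Finset.mem_univ i⟩ with hg
    have hginj : Function.Injective g := by
      intro a b hab
      have := hφinj hab
      exact Subtype.mk_eq_mk.mp this
    have hgmem : ∀ i, g i ∈ s := fun i => hφmem _
    have hfg : ∀ i, f (g i) = f' i := fun i => hφcl ⟨i, Finset.mem_univ i⟩
    have hgμ : ∀ i, μ (g i) = μ i.1 := fun i => congrArg Prod.fst (hfg i)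
    have hgsurj : ∀ y ∈ s, ∃ i, g i = y := by
      intro y hy
      obtain ⟨x, hx⟩ := hφsurj y hy
      exact ⟨x.1, hx⟩
    have hm : ∀ i, ∃ m, m < μ i.1 ∧ t' i = t (g i) ^ q ^ m := by
      intro i
      have hq : Quot.mk _ (t (g i)) = Quot.mk _ (t' i) := congrArg Prod.snd (hfg i)
      obtain ⟨m, hm⟩ := directed_of_quot q (ht' i) (hμ i.1) hq
      refine ⟨m % μ i.1, Nat.mod_lt _ (hμ _), ?_⟩
      have h2 := pow_q_mod' (t (g i)) q (μ (g i)) (ht (g i)) m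
      rw [hgμ i] at h2
      rw [hm, h2]
    choose m₀ hm₀1 hm₀2 using hm
    -- complement bijection
    have h3 : A.val.map μ = s.val.map μ := by
      have h4 := congrArg (Multiset.map Prod.fst) hs
      rw [Multiset.map_map, Multiset.map_map] at h4
      have h5 : A.val.map μ = (Finset.univ : Finset ↥A).val.map (fun i => μ i.1) :=
        map_eq_attach_map A μ (fun i => μ i.1) (fun x => rfl)
      rw [h5]
      exact h4.symm
    have hcompl : (Aᶜ : Finset (Fin k)).val.map μ = (sᶜ : Finset (Fin k)).val.map μ := by
      have hA : A.val + (Aᶜ : Finset (Fin k)).val = (Finset.univ : Finset (Fin k)).val := by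
        have h0 : A.disjUnion Aᶜ disjoint_compl_right = Finset.univ := by
          ext x; simp [Finset.mem_disjUnion]
        rw [← h0]; rfl
      have hs2 : s.val + (sᶜ : Finset (Fin k)).val = (Finset.univ : Finset (Fin k)).val := by
        have h0 : s.disjUnion sᶜ disjoint_compl_right = Finset.univ := by
          ext x; simp [Finset.mem_disjUnion]
        rw [← h0]; rfl
      have := congrArg (Multiset.map μ) (hA.trans hs2.symm)
      rw [Multiset.map_add, Multiset.map_add, h3] at this
      exact add_left_cancel this
    obtain ⟨ψ, hψinj, hψmem, hψcl, hψsurj⟩ :=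
      exists_classBij μ μ (Aᶜ : Finset (Fin k)) (sᶜ : Finset (Fin k)) hcompl
    exact ⟨g, ψ, m₀, fun _ => ⟨⟨hginj, hgmem, hgμ, hgsurj⟩, ⟨hm₀1, hm₀2⟩,
      hψinj, hψmem, hψcl, hψsurj⟩⟩
  · exact ⟨fun i => i.1, fun x => x.1, fun _ => 0, fun hs' => absurd hs' hs⟩

set_option maxHeartbeats 1000000 in
lemma stepA (p e : ℕ) [Fact p.Prime] (q k : ℕ) (μ : Fin k → ℕ) (hμ : ∀ i, 0 < μ i)
    (A : Finset (Fin k)) (t : Fin k → (AlgebraicClosure (GaloisField p e))ˣ) (t' : ↥A → (AlgebraicClosure (GaloisField p e))ˣ)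
    (ht : ∀ i, t i ^ q ^ μ i = t i) (ht' : ∀ i, t' i ^ q ^ μ i.1 = t' i)
    (R : (AlgebraicClosure (GaloisField p e))ˣ → (AlgebraicClosure (GaloisField p e))ˣ → Prop) (hR : R = fun a b => ∃ m : ℕ, b = a ^ q ^ m) :
    (((Finset.univ : Finset (Equiv.Perm (Fin k))) ×ˢ
        Fintype.piFinset (fun i => Finset.range (μ i))).filter
      (fun w => (∀ i, μ (w.1 i) = μ i) ∧
        ∀ i : ↥A, t (w.1⁻¹ i.1) ^ q ^ (w.2 i.1) = t' i)).card =
    ((Finset.univ : Finset (Finset (Fin k))).filter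
      (fun s => s.val.map (fun j => ((μ j, Quot.mk R (t j)) : ℕ × Quot R)) =
        (Finset.univ : Finset ↥A).val.map
          (fun i => ((μ i.1, Quot.mk R (t' i)) : ℕ × Quot R)))).card *
    ((((Finset.univ : Finset (Equiv.Perm ↥A)) ×ˢ
        Fintype.piFinset (fun i : ↥A => Finset.range (μ i.1))).filter
      (fun w => (∀ i, μ (w.1 i).1 = μ i.1) ∧
        ∀ i, t' (w.1⁻¹ i) ^ q ^ (w.2 i) = t' i)).card *
    (((Finset.univ : Finset (Equiv.Perm ↥(Aᶜ : Finset (Fin k)))) ×ˢ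
        Fintype.piFinset (fun i : ↥(Aᶜ : Finset (Fin k)) => Finset.range (μ i.1))).filter
      (fun w => ∀ i, μ (w.1 i).1 = μ i.1)).card) := by
  subst hR
  have hbase0 := baseData q k μ hμ A t t' ht ht' _ rfl
  choose g τ m₀ hbase using hbase0
  set f : Fin k → ℕ × Quot (fun a b : (AlgebraicClosure (GaloisField p e))ˣ => ∃ m : ℕ, b = a ^ q ^ m) :=
    fun j => (μ j, Quot.mk _ (t j)) with hfdef
  set f' : ↥A → ℕ × Quot (fun a b : (AlgebraicClosure (GaloisField p e))ˣ => ∃ m : ℕ, b = a ^ q ^ m) :=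
    fun i => (μ i.1, Quot.mk _ (t' i)) with hf'def
  set Mt' : Multiset (ℕ × Quot (fun a b : (AlgebraicClosure (GaloisField p e))ˣ => ∃ m : ℕ, b = a ^ q ^ m)) :=
    (Finset.univ : Finset ↥A).val.map f' with hMt'def
  set MF := ((Finset.univ : Finset (Equiv.Perm (Fin k))) ×ˢ
      Fintype.piFinset (fun i => Finset.range (μ i))).filter
    (fun w => (∀ i, μ (w.1 i) = μ i) ∧
      ∀ i : ↥A, t (w.1⁻¹ i.1) ^ q ^ (w.2 i.1) = t' i) with hMFdef
  set AdmF := (Finset.univ : Finset (Finset (Fin k))).filter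
    (fun s => s.val.map f = Mt') with hAdmdef
  set StabF := (((Finset.univ : Finset (Equiv.Perm ↥A)) ×ˢ
      Fintype.piFinset (fun i : ↥A => Finset.range (μ i.1))).filter
    (fun w => (∀ i, μ (w.1 i).1 = μ i.1) ∧
      ∀ i, t' (w.1⁻¹ i) ^ q ^ (w.2 i) = t' i)) with hStabdef
  set WcF := (((Finset.univ : Finset (Equiv.Perm ↥(Aᶜ : Finset (Fin k)))) ×ˢ
      Fintype.piFinset (fun i : ↥(Aᶜ : Finset (Fin k)) => Finset.range (μ i.1))).filter
    (fun w => ∀ i, μ (w.1 i).1 = μ i.1)) with hWcdef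
  rw [← Finset.card_product, ← Finset.card_product]
  -- membership characterizations
  have hmemMF : ∀ a : Equiv.Perm (Fin k) × (Fin k → ℕ), a ∈ MF ↔
      (∀ i, μ (a.1 i) = μ i) ∧ (∀ i, a.2 i < μ i) ∧
      (∀ i : ↥A, t (a.1⁻¹ i.1) ^ q ^ (a.2 i.1) = t' i) := by
    intro a
    rw [hMFdef, Finset.mem_filter, Finset.mem_product, Fintype.mem_piFinset]
    simp only [Finset.mem_univ, true_and, Finset.mem_range]
    all_goals tauto
  have hmemAdm : ∀ s : Finset (Fin k), s ∈ AdmF ↔ s.val.map f = Mt' := by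
    intro s
    rw [hAdmdef, Finset.mem_filter]
    simp only [Finset.mem_univ, true_and]
  have hmemStab : ∀ w : Equiv.Perm ↥A × (↥A → ℕ), w ∈ StabF ↔
      (∀ i, w.2 i < μ i.1) ∧ (∀ i, μ (w.1 i).1 = μ i.1) ∧
      (∀ i, t' (w.1⁻¹ i) ^ q ^ (w.2 i) = t' i) := by
    intro w
    rw [hStabdef, Finset.mem_filter, Finset.mem_product, Fintype.mem_piFinset]
    simp only [Finset.mem_univ, true_and, Finset.mem_range]
    all_goals tauto
  have hmemWc : ∀ w : Equiv.Perm ↥(Aᶜ : Finset (Fin k)) × (↥(Aᶜ : Finset (Fin k)) → ℕ),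
      w ∈ WcF ↔ (∀ i, w.2 i < μ i.1) ∧ (∀ i, μ (w.1 i).1 = μ i.1) := by
    intro w
    rw [hWcdef, Finset.mem_filter, Finset.mem_product, Fintype.mem_piFinset]
    simp only [Finset.mem_univ, true_and, Finset.mem_range]
    all_goals tauto
  -- the image finset
  set Sof : Equiv.Perm (Fin k) × (Fin k → ℕ) → Finset (Fin k) :=
    fun a => A.image (fun x => a.1⁻¹ x) with hSofdef
  have hSadm : ∀ a ∈ MF, (Sof a).val.map f = Mt' := by
    intro a ha
    obtain ⟨hπμ, hmlt, htA⟩ := (hmemMF a).1 ha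
    have hinj : Set.InjOn (fun x => a.1⁻¹ x) ↑A := (Equiv.injective _).injOn
    have himg : (Sof a).val = A.val.map (fun x => a.1⁻¹ x) :=
      Finset.image_val_of_injOn hinj
    rw [himg, Multiset.map_map]
    refine map_eq_attach_map A (f ∘ (fun x => a.1⁻¹ x)) f' ?_
    intro x
    have h1 : μ (a.1⁻¹ x.1) = μ x.1 := by
      have h2 := hπμ (a.1⁻¹ x.1)
      rw [Equiv.Perm.apply_inv_self] at h2
      exact h2.symm
    have h2 : Quot.mk (fun a b : (AlgebraicClosure (GaloisField p e))ˣ => ∃ m : ℕ, b = a ^ q ^ m) (t (a.1⁻¹ x.1)) =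
        Quot.mk _ (t' x) := Quot.sound ⟨a.2 x.1, (htA x).symm⟩
    simp only [hfdef, hf'def, Function.comp_apply, Prod.mk.injEq]
    exact ⟨h1, h2⟩
  -- the Stab-component candidate map
  set Fσ : (Equiv.Perm (Fin k) × (Fin k → ℕ)) → ↥A → ↥A :=
    fun a j => if h : a.1 (g (Sof a) j) ∈ A then ⟨a.1 (g (Sof a) j), h⟩ else j with hFσdef
  have hFσspec : ∀ a ∈ MF, ∀ j : ↥A, (Fσ a j).1 = a.1 (g (Sof a) j) := by
    intro a ha j
    obtain ⟨⟨hginj, hgmem, hgμ, hgsurj⟩, _, _⟩ := hbase (Sof a) (hSadm a ha)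
    have hmem : a.1 (g (Sof a) j) ∈ A := by
      obtain ⟨x, hxA, hx⟩ := Finset.mem_image.1 (hgmem j)
      rw [← hx, Equiv.Perm.apply_inv_self]
      exact hxA
    rw [hFσdef]
    dsimp only
    rw [dif_pos hmem]
  have hFσbij : ∀ a ∈ MF, Function.Bijective (Fσ a) := by
    intro a ha
    obtain ⟨⟨hginj, hgmem, hgμ, hgsurj⟩, _, _⟩ := hbase (Sof a) (hSadm a ha)
    constructor
    · intro j j' hjj
      have h1 := congrArg Subtype.val hjj
      rw [hFσspec a ha j, hFσspec a ha j'] at h1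
      exact hginj (a.1.injective h1)
    · intro i
      have hmem : a.1⁻¹ i.1 ∈ Sof a := Finset.mem_image.2 ⟨i.1, i.2, rfl⟩
      obtain ⟨j, hj⟩ := hgsurj _ hmem
      refine ⟨j, Subtype.ext ?_⟩
      rw [hFσspec a ha j, hj, Equiv.Perm.apply_inv_self]
  -- the Wc-component candidate map
  set Fρ : (Equiv.Perm (Fin k) × (Fin k → ℕ)) →
      ↥(Aᶜ : Finset (Fin k)) → ↥(Aᶜ : Finset (Fin k)) :=
    fun a x => if h : a.1 (τ (Sof a) x) ∈ (Aᶜ : Finset (Fin k)) then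
      ⟨a.1 (τ (Sof a) x), h⟩ else x with hFρdef
  have hFρspec : ∀ a ∈ MF, ∀ x, (Fρ a x).1 = a.1 (τ (Sof a) x) := by
    intro a ha x
    obtain ⟨_, _, ⟨hτinj, hτmem, hτμ, hτsurj⟩⟩ := hbase (Sof a) (hSadm a ha)
    have hmem : a.1 (τ (Sof a) x) ∈ (Aᶜ : Finset (Fin k)) := by
      rw [Finset.mem_compl]
      intro hmem2
      have h3 : a.1⁻¹ (a.1 (τ (Sof a) x)) ∈ Sof a := Finset.mem_image.2 ⟨_, hmem2, rfl⟩
      rw [Equiv.Perm.inv_apply_self] at h3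
      exact Finset.mem_compl.1 (hτmem x) h3
    rw [hFρdef]
    dsimp only
    rw [dif_pos hmem]
  have hFρbij : ∀ a ∈ MF, Function.Bijective (Fρ a) := by
    intro a ha
    obtain ⟨_, _, ⟨hτinj, hτmem, hτμ, hτsurj⟩⟩ := hbase (Sof a) (hSadm a ha)
    constructor
    · intro x y hxy
      have h1 := congrArg Subtype.val hxy
      rw [hFρspec a ha x, hFρspec a ha y] at h1
      exact hτinj (a.1.injective h1)
    · intro x
      have hmem : a.1⁻¹ x.1 ∈ (Sof a)ᶜ := by
        rw [Finset.mem_compl]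
        intro hmem2
        obtain ⟨z, hz, hz2⟩ := Finset.mem_image.1 hmem2
        have : z = x.1 := (Equiv.injective _) hz2
        rw [this] at hz
        exact Finset.mem_compl.1 x.2 hz
      obtain ⟨y, hy⟩ := hτsurj _ hmem
      refine ⟨y, Subtype.ext ?_⟩
      rw [hFρspec a ha y, hy, Equiv.Perm.apply_inv_self]
  -- the backward function candidates
  set Pfun : Finset (Fin k) × ((Equiv.Perm ↥A × (↥A → ℕ)) ×
      (Equiv.Perm ↥(Aᶜ : Finset (Fin k)) × (↥(Aᶜ : Finset (Fin k)) → ℕ))) → Fin k → Fin k :=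
    fun b x => if h : x ∈ A then g b.1 ((b.2.1.1)⁻¹ ⟨x, h⟩)
      else τ b.1 ((b.2.2.1)⁻¹ ⟨x, Finset.mem_compl.2 h⟩) with hPdef
  set mfun : Finset (Fin k) × ((Equiv.Perm ↥A × (↥A → ℕ)) ×
      (Equiv.Perm ↥(Aᶜ : Finset (Fin k)) × (↥(Aᶜ : Finset (Fin k)) → ℕ))) → Fin k → ℕ :=
    fun b x => if h : x ∈ A then
      (b.2.1.2 ⟨x, h⟩ + m₀ b.1 ((b.2.1.1)⁻¹ ⟨x, h⟩)) % μ x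
      else b.2.2.2 ⟨x, Finset.mem_compl.2 h⟩ with hmfundef
  have hPpos : ∀ b, ∀ x (hx : x ∈ A), Pfun b x = g b.1 ((b.2.1.1)⁻¹ ⟨x, hx⟩) := by
    intro b x hx
    rw [hPdef]
    dsimp only
    rw [dif_pos hx]
  have hPneg : ∀ b, ∀ x (hx : x ∉ A),
      Pfun b x = τ b.1 ((b.2.2.1)⁻¹ ⟨x, Finset.mem_compl.2 hx⟩) := by
    intro b x hx
    rw [hPdef]
    dsimp only
    rw [dif_neg hx]
  have hmpos : ∀ b, ∀ x (hx : x ∈ A),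
      mfun b x = (b.2.1.2 ⟨x, hx⟩ + m₀ b.1 ((b.2.1.1)⁻¹ ⟨x, hx⟩)) % μ x := by
    intro b x hx
    rw [hmfundef]
    dsimp only
    rw [dif_pos hx]
  have hmneg : ∀ b, ∀ x (hx : x ∉ A),
      mfun b x = b.2.2.2 ⟨x, Finset.mem_compl.2 hx⟩ := by
    intro b x hx
    rw [hmfundef]
    dsimp only
    rw [dif_neg hx]
  have hPbij : ∀ b ∈ AdmF ×ˢ (StabF ×ˢ WcF), Function.Bijective (Pfun b) := by
    intro b hb
    obtain ⟨hb1, hb2⟩ := Finset.mem_product.1 hb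
    obtain ⟨hbS, hbW⟩ := Finset.mem_product.1 hb2
    obtain ⟨⟨hginj, hgmem, hgμ, hgsurj⟩, ⟨hm₀lt, hm₀eq⟩, hτinj, hτmem, hτμ, hτsurj⟩ :=
      hbase b.1 ((hmemAdm b.1).1 hb1)
    constructor
    · intro x y hxy
      by_cases hx : x ∈ A <;> by_cases hy : y ∈ A
      · rw [hPpos b x hx, hPpos b y hy] at hxy
        have h1 := (Equiv.injective _) (hginj hxy)
        exact Subtype.mk_eq_mk.mp h1
      · rw [hPpos b x hx, hPneg b y hy] at hxy
        exact absurd (hxy ▸ hgmem _) (Finset.mem_compl.1 (hτmem _))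
      · rw [hPneg b x hx, hPpos b y hy] at hxy
        exact absurd (hxy.symm ▸ hgmem _) (Finset.mem_compl.1 (hτmem _))
      · rw [hPneg b x hx, hPneg b y hy] at hxy
        have h1 := (Equiv.injective _) (hτinj hxy)
        exact Subtype.mk_eq_mk.mp h1
    · intro y
      by_cases hy : y ∈ b.1
      · obtain ⟨j, hj⟩ := hgsurj y hy
        refine ⟨(b.2.1.1 j).1, ?_⟩
        rw [hPpos b _ (b.2.1.1 j).2]
        show g b.1 ((b.2.1.1)⁻¹ (b.2.1.1 j)) = y
        rw [Equiv.Perm.inv_apply_self]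
        exact hj
      · obtain ⟨x, hx⟩ := hτsurj y (Finset.mem_compl.2 hy)
        have hnotA : (b.2.2.1 x).1 ∉ A := Finset.mem_compl.1 (b.2.2.1 x).2
        refine ⟨(b.2.2.1 x).1, ?_⟩
        rw [hPneg b _ hnotA]
        show τ b.1 ((b.2.2.1)⁻¹ (b.2.2.1 x)) = y
        rw [Equiv.Perm.inv_apply_self]
        exact hx
  -- membership of the backward image
  have hjmem : ∀ b (hb : b ∈ AdmF ×ˢ (StabF ×ˢ WcF)),
      (((Equiv.ofBijective (Pfun b) (hPbij b hb)).symm, mfun b) :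
        Equiv.Perm (Fin k) × (Fin k → ℕ)) ∈ MF := by
    intro b hb
    obtain ⟨hb1, hb2⟩ := Finset.mem_product.1 hb
    obtain ⟨hbS, hbW⟩ := Finset.mem_product.1 hb2
    obtain ⟨⟨hginj, hgmem, hgμ, hgsurj⟩, ⟨hm₀lt, hm₀eq⟩, hτinj, hτmem, hτμ, hτsurj⟩ :=
      hbase b.1 ((hmemAdm b.1).1 hb1)
    obtain ⟨hnlt, hσμ, hσt⟩ := (hmemStab _).1 hbS
    obtain ⟨hllt, hρμ⟩ := (hmemWc _).1 hbW
    set π' := (Equiv.ofBijective (Pfun b) (hPbij b hb)).symm with hπ'def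
    have hπ'app : ∀ y, Pfun b (π' y) = y := fun y => by
      rw [hπ'def]; exact Equiv.apply_symm_apply (Equiv.ofBijective (Pfun b) (hPbij b hb)) y
    have hπ'inv : ∀ y, (π')⁻¹ y = Pfun b y := fun y => rfl
    have hμσinv : ∀ (i : ↥A), μ ((b.2.1.1)⁻¹ i).1 = μ i.1 := by
      intro i
      have h7 := hσμ ((b.2.1.1)⁻¹ i)
      rw [Equiv.Perm.apply_inv_self] at h7
      exact h7.symm
    have hμρinv : ∀ (x : ↥(Aᶜ : Finset (Fin k))), μ ((b.2.2.1)⁻¹ x).1 = μ x.1 := by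
      intro x
      have h7 := hρμ ((b.2.2.1)⁻¹ x)
      rw [Equiv.Perm.apply_inv_self] at h7
      exact h7.symm
    have hPμ : ∀ x, μ (Pfun b x) = μ x := by
      intro x
      by_cases hx : x ∈ A
      · rw [hPpos b x hx, hgμ]
        exact hμσinv ⟨x, hx⟩
      · rw [hPneg b x hx, hτμ]
        exact hμρinv ⟨x, Finset.mem_compl.2 hx⟩
    rw [hmemMF]
    refine ⟨?_, ?_, ?_⟩
    · intro i
      show μ (π' i) = μ i
      have h8 := hPμ (π' i)
      rw [hπ'app i] at h8
      exact h8.symm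
    · intro x
      show mfun b x < μ x
      by_cases hx : x ∈ A
      · rw [hmpos b x hx]; exact Nat.mod_lt _ (hμ x)
      · rw [hmneg b x hx]; exact hllt _
    · intro i
      show t ((π')⁻¹ i.1) ^ q ^ (mfun b i.1) = t' i
      rw [hπ'inv i.1, hPpos b i.1 i.2, hmpos b i.1 i.2]
      have heta : (⟨i.1, i.2⟩ : ↥A) = i := rfl
      rw [heta]
      have hμj : μ ((b.2.1.1)⁻¹ i).1 = μ i.1 := hμσinv i
      have h₀ : m₀ b.1 ((b.2.1.1)⁻¹ i) < μ i.1 := by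
        rw [← hμj]; exact hm₀lt _
      have htors : t (g b.1 ((b.2.1.1)⁻¹ i)) ^ q ^ μ i.1 = t (g b.1 ((b.2.1.1)⁻¹ i)) := by
        have h9 := ht (g b.1 ((b.2.1.1)⁻¹ i))
        rwa [hgμ _, hμj] at h9
      calc t (g b.1 ((b.2.1.1)⁻¹ i)) ^ q ^ ((b.2.1.2 i + m₀ b.1 ((b.2.1.1)⁻¹ i)) % μ i.1)
          = t (g b.1 ((b.2.1.1)⁻¹ i)) ^ q ^ (b.2.1.2 i + m₀ b.1 ((b.2.1.1)⁻¹ i)) :=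
            (pow_q_mod' _ q (μ i.1) htors _).symm
        _ = (t (g b.1 ((b.2.1.1)⁻¹ i)) ^ q ^ (m₀ b.1 ((b.2.1.1)⁻¹ i))) ^ q ^ (b.2.1.2 i) := by
            rw [pow_pow_add, Nat.add_comm]
        _ = t' ((b.2.1.1)⁻¹ i) ^ q ^ (b.2.1.2 i) := by rw [← hm₀eq _]
        _ = t' i := hσt i
  refine Finset.card_bij'
    (fun a ha => (Sof a,
      ((Equiv.ofBijective (Fσ a) (hFσbij a ha),
        fun i : ↥A => (a.2 i.1 + μ i.1 -
          m₀ (Sof a) ((Equiv.ofBijective (Fσ a) (hFσbij a ha)).symm i)) % μ i.1),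
       (Equiv.ofBijective (Fρ a) (hFρbij a ha),
        fun x : ↥(Aᶜ : Finset (Fin k)) => a.2 x.1))))
    (fun b hb => ((Equiv.ofBijective (Pfun b) (hPbij b hb)).symm, mfun b))
    ?_ ?_ ?_ ?_
  · -- forward lands in the product
    intro a ha
    obtain ⟨hπμ, hmlt, htA⟩ := (hmemMF a).1 ha
    obtain ⟨⟨hginj, hgmem, hgμ, hgsurj⟩, ⟨hm₀lt, hm₀eq⟩, hτinj, hτmem, hτμ, hτsurj⟩ :=
      hbase (Sof a) (hSadm a ha)
    set σof := Equiv.ofBijective (Fσ a) (hFσbij a ha) with hσofdef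
    set ρof := Equiv.ofBijective (Fρ a) (hFρbij a ha) with hρofdef
    have hσval : ∀ j, (σof j).1 = a.1 (g (Sof a) j) := fun j => hFσspec a ha j
    have hρval : ∀ x, (ρof x).1 = a.1 (τ (Sof a) x) := fun x => hFρspec a ha x
    have hσμ2 : ∀ j, μ (σof j).1 = μ j.1 := by
      intro j; rw [hσval j, hπμ, hgμ]
    have hρμ2 : ∀ x, μ (ρof x).1 = μ x.1 := by
      intro x; rw [hρval x, hπμ, hτμ]
    rw [Finset.mem_product]
    refine ⟨(hmemAdm _).2 (hSadm a ha), ?_⟩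
    rw [Finset.mem_product]
    constructor
    · rw [hmemStab]
      refine ⟨fun i => Nat.mod_lt _ (hμ i.1), hσμ2, ?_⟩
      intro i
      show t' ((σof)⁻¹ i) ^ q ^
        ((a.2 i.1 + μ i.1 - m₀ (Sof a) (σof.symm i)) % μ i.1) = t' i
      rw [Equiv.Perm.inv_def]
      set j := σof.symm i with hjdef
      have hji : σof j = i := by rw [hjdef]; exact Equiv.apply_symm_apply σof i
      have hival : i.1 = a.1 (g (Sof a) j) := by rw [← hσval j, hji]
      have hπinv : a.1⁻¹ i.1 = g (Sof a) j := by
        rw [hival, Equiv.Perm.inv_apply_self]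
      have hμji : μ j.1 = μ i.1 := by
        rw [← hji]; exact (hσμ2 j).symm
      have h₀ : m₀ (Sof a) j < μ i.1 := by rw [← hμji]; exact hm₀lt j
      have htors : t (g (Sof a) j) ^ q ^ μ i.1 = t (g (Sof a) j) := by
        have h9 := ht (g (Sof a) j)
        rwa [hgμ j, hμji] at h9
      calc t' j ^ q ^ ((a.2 i.1 + μ i.1 - m₀ (Sof a) j) % μ i.1)
          = (t (g (Sof a) j) ^ q ^ (m₀ (Sof a) j)) ^ q ^
              ((a.2 i.1 + μ i.1 - m₀ (Sof a) j) % μ i.1) := by rw [← hm₀eq j]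
        _ = t (g (Sof a) j) ^ q ^
              (m₀ (Sof a) j + (a.2 i.1 + μ i.1 - m₀ (Sof a) j) % μ i.1) :=
            pow_pow_add _ _ _ _
        _ = t (g (Sof a) j) ^ q ^ (a.2 i.1) := by
            rw [pow_q_mod' _ q (μ i.1) htors, mod_h1 _ _ _ h₀ (hmlt i.1)]
        _ = t (a.1⁻¹ i.1) ^ q ^ (a.2 i.1) := by rw [hπinv]
        _ = t' i := htA i
    · rw [hmemWc]
      exact ⟨fun x => hmlt x.1, hρμ2⟩
  · -- backward lands in MF
    exact fun b hb => hjmem b hb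
  · -- left inverse
    intro a ha
    obtain ⟨hπμ, hmlt, htA⟩ := (hmemMF a).1 ha
    obtain ⟨⟨hginj, hgmem, hgμ, hgsurj⟩, ⟨hm₀lt, hm₀eq⟩, hτinj, hτmem, hτμ, hτsurj⟩ :=
      hbase (Sof a) (hSadm a ha)
    set σof := Equiv.ofBijective (Fσ a) (hFσbij a ha) with hσofdef
    set ρof := Equiv.ofBijective (Fρ a) (hFρbij a ha) with hρofdef
    have hσval : ∀ j, (σof j).1 = a.1 (g (Sof a) j) := fun j => hFσspec a ha j
    have hρval : ∀ x, (ρof x).1 = a.1 (τ (Sof a) x) := fun x => hFρspec a ha x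
    have hσμ2 : ∀ j, μ (σof j).1 = μ j.1 := by
      intro j; rw [hσval j, hπμ, hgμ]
    have hμσsymm : ∀ i : ↥A, μ (σof.symm i).1 = μ i.1 := by
      intro i
      have h7 := hσμ2 (σof.symm i)
      rw [Equiv.apply_symm_apply] at h7
      exact h7.symm
    set b' : Finset (Fin k) × ((Equiv.Perm ↥A × (↥A → ℕ)) ×
        (Equiv.Perm ↥(Aᶜ : Finset (Fin k)) × (↥(Aᶜ : Finset (Fin k)) → ℕ))) :=
      (Sof a, ((σof,
        fun i : ↥A => (a.2 i.1 + μ i.1 - m₀ (Sof a) (σof.symm i)) % μ i.1),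
       (ρof, fun x : ↥(Aᶜ : Finset (Fin k)) => a.2 x.1))) with hb'def
    have hE : ∀ x, Pfun b' x = a.1⁻¹ x := by
      intro x
      by_cases hx : x ∈ A
      · rw [hPpos b' x hx]
        show g (Sof a) (σof⁻¹ ⟨x, hx⟩) = a.1⁻¹ x
        apply a.1.injective
        rw [Equiv.Perm.apply_inv_self, ← hσval (σof⁻¹ ⟨x, hx⟩),
          Equiv.Perm.apply_inv_self]
      · rw [hPneg b' x hx]
        show τ (Sof a) (ρof⁻¹ ⟨x, Finset.mem_compl.2 hx⟩) = a.1⁻¹ x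
        apply a.1.injective
        rw [Equiv.Perm.apply_inv_self, ← hρval (ρof⁻¹ ⟨x, Finset.mem_compl.2 hx⟩),
          Equiv.Perm.apply_inv_self]
    have hperm : ∀ h : Function.Bijective (Pfun b'),
        (Equiv.ofBijective (Pfun b') h).symm = a.1 := by
      intro h
      have h2 : Equiv.ofBijective (Pfun b') h = a.1⁻¹ := Equiv.ext hE
      rw [h2, Equiv.Perm.inv_def, Equiv.symm_symm]
    refine Prod.ext (hperm _) ?_
    show mfun b' = a.2
    funext x
    by_cases hx : x ∈ A
    · rw [hmpos b' x hx]
      show ((a.2 x + μ x - m₀ (Sof a) (σof.symm ⟨x, hx⟩)) % μ x +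
        m₀ (Sof a) (σof.symm ⟨x, hx⟩)) % μ x = a.2 x
      have h₀ : m₀ (Sof a) (σof.symm ⟨x, hx⟩) < μ x := by
        have h10 := hm₀lt (σof.symm ⟨x, hx⟩)
        rw [hμσsymm ⟨x, hx⟩] at h10
        exact h10
      exact mod_h2 (a.2 x) _ (μ x) h₀ (hmlt x)
    · rw [hmneg b' x hx]
  · -- right inverse
    intro b hb
    obtain ⟨hb1, hb2⟩ := Finset.mem_product.1 hb
    obtain ⟨hbS, hbW⟩ := Finset.mem_product.1 hb2
    obtain ⟨⟨hginj, hgmem, hgμ, hgsurj⟩, ⟨hm₀lt, hm₀eq⟩, hτinj, hτmem, hτμ, hτsurj⟩ :=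
      hbase b.1 ((hmemAdm b.1).1 hb1)
    obtain ⟨hnlt, hσμ, hσt⟩ := (hmemStab _).1 hbS
    obtain ⟨hllt, hρμ⟩ := (hmemWc _).1 hbW
    dsimp only
    set π' := (Equiv.ofBijective (Pfun b) (hPbij b hb)).symm with hπ'def
    have hπ'inv : ∀ y, (π')⁻¹ y = Pfun b y := fun y => rfl
    set a' : Equiv.Perm (Fin k) × (Fin k → ℕ) := (π', mfun b) with ha'def
    have ha' : a' ∈ MF := hjmem b hb
    have hμσinv : ∀ (i : ↥A), μ ((b.2.1.1)⁻¹ i).1 = μ i.1 := by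
      intro i
      have h7 := hσμ ((b.2.1.1)⁻¹ i)
      rw [Equiv.Perm.apply_inv_self] at h7
      exact h7.symm
    have hSb : Sof a' = b.1 := by
      ext y
      show y ∈ A.image (fun x => a'.1⁻¹ x) ↔ y ∈ b.1
      rw [Finset.mem_image]
      constructor
      · rintro ⟨x, hxA, rfl⟩
        have h11 : a'.1⁻¹ x = Pfun b x := hπ'inv x
        rw [h11, hPpos b x hxA]
        exact hgmem _
      · intro hy
        obtain ⟨j, hj⟩ := hgsurj y hy
        refine ⟨(b.2.1.1 j).1, (b.2.1.1 j).2, ?_⟩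
        have h11 : a'.1⁻¹ (b.2.1.1 j).1 = Pfun b (b.2.1.1 j).1 := hπ'inv _
        rw [h11, hPpos b _ (b.2.1.1 j).2]
        show g b.1 ((b.2.1.1)⁻¹ (b.2.1.1 j)) = y
        rw [Equiv.Perm.inv_apply_self]
        exact hj
    have hσcomp : ∀ (hbij : Function.Bijective (Fσ a')),
        Equiv.ofBijective (Fσ a') hbij = b.2.1.1 := by
      intro hbij
      apply Equiv.ext
      intro j
      show Fσ a' j = b.2.1.1 j
      apply Subtype.ext
      rw [hFσspec a' ha' j, hSb]
      show π' (g b.1 j) = (b.2.1.1 j).1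
      rw [hπ'def, Equiv.symm_apply_eq]
      show g b.1 j = Pfun b (b.2.1.1 j).1
      rw [hPpos b _ (b.2.1.1 j).2]
      show g b.1 j = g b.1 ((b.2.1.1)⁻¹ (b.2.1.1 j))
      rw [Equiv.Perm.inv_apply_self]
    have hρcomp : ∀ (hbij : Function.Bijective (Fρ a')),
        Equiv.ofBijective (Fρ a') hbij = b.2.2.1 := by
      intro hbij
      apply Equiv.ext
      intro x
      show Fρ a' x = b.2.2.1 x
      apply Subtype.ext
      rw [hFρspec a' ha' x, hSb]
      show π' (τ b.1 x) = (b.2.2.1 x).1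
      rw [hπ'def, Equiv.symm_apply_eq]
      show τ b.1 x = Pfun b (b.2.2.1 x).1
      rw [hPneg b _ (Finset.mem_compl.1 (b.2.2.1 x).2)]
      show τ b.1 x = τ b.1 ((b.2.2.1)⁻¹ (b.2.2.1 x))
      rw [Equiv.Perm.inv_apply_self]
    show (Sof a', ((Equiv.ofBijective (Fσ a') (hFσbij a' ha'),
        fun i : ↥A => (a'.2 i.1 + μ i.1 -
          m₀ (Sof a') ((Equiv.ofBijective (Fσ a') (hFσbij a' ha')).symm i)) % μ i.1),
       (Equiv.ofBijective (Fρ a') (hFρbij a' ha'),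
        fun x : ↥(Aᶜ : Finset (Fin k)) => a'.2 x.1))) =
      (b.1, ((b.2.1.1, b.2.1.2), (b.2.2.1, b.2.2.2)))
    rw [hσcomp, hρcomp, hSb]
    simp only [Prod.mk.injEq]
    refine ⟨trivial, ⟨trivial, ?_⟩, trivial, ?_⟩
    · funext i
      show (mfun b i.1 + μ i.1 - m₀ b.1 ((b.2.1.1)⁻¹ i)) % μ i.1 = b.2.1.2 i
      rw [hmpos b i.1 i.2]
      have h₀ : m₀ b.1 ((b.2.1.1)⁻¹ i) < μ i.1 := by
        rw [← hμσinv i]; exact hm₀lt _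
      show ((b.2.1.2 i + m₀ b.1 ((b.2.1.1)⁻¹ i)) % μ i.1 + μ i.1 -
        m₀ b.1 ((b.2.1.1)⁻¹ i)) % μ i.1 = b.2.1.2 i
      exact mod_h3 _ _ _ h₀ (hnlt i)
    · funext x
      show mfun b x.1 = b.2.2.2 x
      rw [hmneg b x.1 (Finset.mem_compl.1 x.2)]

/-- Concrete model of formula (3.6) of the paper (the count `#M(μ,μ',t,t')`), in the torus
model of `stmt13`/`stmt14` for `GL_n`. -/
theorem stmt15 (p e k : ℕ) [Fact p.Prime] (he : 0 < e)
    (μ : Fin k → ℕ) (hμ : ∀ i, 0 < μ i)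
    (A : Finset (Fin k))
    (t : Fin k → (AlgebraicClosure (GaloisField p e))ˣ)
    (ht : ∀ i, t i ^ (p ^ e) ^ μ i = t i)
    (t' : (i : A) → (AlgebraicClosure (GaloisField p e))ˣ)
    (ht' : ∀ i : A, t' i ^ (p ^ e) ^ μ i.1 = t' i)
    (relK : (AlgebraicClosure (GaloisField p e))ˣ → (AlgebraicClosure (GaloisField p e))ˣ → Prop)
    (hrelK : relK = fun a b => ∃ m : ℕ, b = a ^ (p ^ e) ^ m)
    (D : Set ((i : A) → (AlgebraicClosure (GaloisField p e))ˣ))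
    (hD : D = {u | ∃ g : A → Fin k, Function.Injective g ∧ (∀ i, μ (g i) = μ i.1) ∧
        ∀ i, ∃ m : ℕ, u i = t (g i) ^ (p ^ e) ^ m})
    (M : Set (Equiv.Perm (Fin k) × (Fin k → ℕ)))
    (hM : M = {w | (∀ i, μ (w.1 i) = μ i) ∧ (∀ i, w.2 i < μ i) ∧
        ∀ i : A, t (w.1⁻¹ i.1) ^ (p ^ e) ^ (w.2 i.1) = t' i})
    (Stab : Set (Equiv.Perm A × ((i : A) → ℕ)))
    (hStab : Stab = {w | (∀ i : A, μ (w.1 i).1 = μ i.1) ∧ (∀ i, w.2 i < μ i.1) ∧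
        ∀ i, t' (w.1⁻¹ i) ^ (p ^ e) ^ (w.2 i) = t' i})
    (Wc : Set (Equiv.Perm ((Aᶜ : Finset (Fin k))) × ((i : (Aᶜ : Finset (Fin k))) → ℕ)))
    (hWc : Wc = {w | (∀ i, μ (w.1 i).1 = μ i.1) ∧ ∀ i, w.2 i < μ i.1})
    (Mt Mt' : Multiset (ℕ × Quot relK))
    (hMt : Mt = Finset.univ.val.map (fun i => ((μ i, Quot.mk relK (t i)) : ℕ × Quot relK)))
    (hMt' : Mt' = (Finset.univ : Finset A).val.map
        (fun i => ((μ i.1, Quot.mk relK (t' i)) : ℕ × Quot relK))) :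
    Nat.card M =
      if t' ∈ D then
        Nat.card Stab * Nat.card Wc *
          ∏ pr ∈ Mt.toFinset, (Mt.count pr).choose (Mt'.count pr)
      else 0 := by
  subst hD hM hStab hWc hMt hMt'
  by_cases hDD : t' ∈ {u : (i : A) → (AlgebraicClosure (GaloisField p e))ˣ |
      ∃ g : A → Fin k, Function.Injective g ∧ (∀ i, μ (g i) = μ i.1) ∧
        ∀ i, ∃ m : ℕ, u i = t (g i) ^ (p ^ e) ^ m}
  · rw [if_pos hDD]
    -- convert the three set cards to finset cards
    have hMcard : Nat.card ↥{w : Equiv.Perm (Fin k) × (Fin k → ℕ) |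
        (∀ i, μ (w.1 i) = μ i) ∧ (∀ i, w.2 i < μ i) ∧
        ∀ i : A, t (w.1⁻¹ i.1) ^ (p ^ e) ^ (w.2 i.1) = t' i} =
        (((Finset.univ : Finset (Equiv.Perm (Fin k))) ×ˢ
            Fintype.piFinset (fun i => Finset.range (μ i))).filter
          (fun w => (∀ i, μ (w.1 i) = μ i) ∧
            ∀ i : ↥A, t (w.1⁻¹ i.1) ^ (p ^ e) ^ (w.2 i.1) = t' i)).card := by
      rw [show {w : Equiv.Perm (Fin k) × (Fin k → ℕ) |
          (∀ i, μ (w.1 i) = μ i) ∧ (∀ i, w.2 i < μ i) ∧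
          ∀ i : A, t (w.1⁻¹ i.1) ^ (p ^ e) ^ (w.2 i.1) = t' i} =
        ↑(((Finset.univ : Finset (Equiv.Perm (Fin k))) ×ˢ
            Fintype.piFinset (fun i => Finset.range (μ i))).filter
          (fun w => (∀ i, μ (w.1 i) = μ i) ∧
            ∀ i : ↥A, t (w.1⁻¹ i.1) ^ (p ^ e) ^ (w.2 i.1) = t' i)) from ?_]
      · rw [Nat.card_coe_set_eq, Set.ncard_coe_finset]
      · ext w
        simp only [Set.mem_setOf_eq, Finset.coe_filter, Finset.mem_product,
          Fintype.mem_piFinset, Finset.mem_range, Finset.mem_univ, true_and]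
        tauto
    have hScard : Nat.card ↥{w : Equiv.Perm ↥A × (↥A → ℕ) |
        (∀ i : ↥A, μ (w.1 i).1 = μ i.1) ∧ (∀ i, w.2 i < μ i.1) ∧
        ∀ i, t' (w.1⁻¹ i) ^ (p ^ e) ^ (w.2 i) = t' i} =
        ((((Finset.univ : Finset (Equiv.Perm ↥A)) ×ˢ
            Fintype.piFinset (fun i : ↥A => Finset.range (μ i.1))).filter
          (fun w => (∀ i, μ (w.1 i).1 = μ i.1) ∧
            ∀ i, t' (w.1⁻¹ i) ^ (p ^ e) ^ (w.2 i) = t' i))).card := by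
      rw [show {w : Equiv.Perm ↥A × (↥A → ℕ) |
          (∀ i : ↥A, μ (w.1 i).1 = μ i.1) ∧ (∀ i, w.2 i < μ i.1) ∧
          ∀ i, t' (w.1⁻¹ i) ^ (p ^ e) ^ (w.2 i) = t' i} =
        ↑((((Finset.univ : Finset (Equiv.Perm ↥A)) ×ˢ
            Fintype.piFinset (fun i : ↥A => Finset.range (μ i.1))).filter
          (fun w => (∀ i, μ (w.1 i).1 = μ i.1) ∧
            ∀ i, t' (w.1⁻¹ i) ^ (p ^ e) ^ (w.2 i) = t' i))) from ?_]
      · rw [Nat.card_coe_set_eq, Set.ncard_coe_finset]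
      · ext w
        simp only [Set.mem_setOf_eq, Finset.coe_filter, Finset.mem_product,
          Fintype.mem_piFinset, Finset.mem_range, Finset.mem_univ, true_and]
        tauto
    have hWcard : Nat.card ↥{w : Equiv.Perm ↥(Aᶜ : Finset (Fin k)) ×
          (↥(Aᶜ : Finset (Fin k)) → ℕ) |
        (∀ i, μ (w.1 i).1 = μ i.1) ∧ ∀ i, w.2 i < μ i.1} =
        ((((Finset.univ : Finset (Equiv.Perm ↥(Aᶜ : Finset (Fin k)))) ×ˢ
            Fintype.piFinset (fun i : ↥(Aᶜ : Finset (Fin k)) => Finset.range (μ i.1))).filter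
          (fun w => ∀ i, μ (w.1 i).1 = μ i.1))).card := by
      rw [show {w : Equiv.Perm ↥(Aᶜ : Finset (Fin k)) × (↥(Aᶜ : Finset (Fin k)) → ℕ) |
          (∀ i, μ (w.1 i).1 = μ i.1) ∧ ∀ i, w.2 i < μ i.1} =
        ↑((((Finset.univ : Finset (Equiv.Perm ↥(Aᶜ : Finset (Fin k)))) ×ˢ
            Fintype.piFinset (fun i : ↥(Aᶜ : Finset (Fin k)) => Finset.range (μ i.1))).filter
          (fun w => ∀ i, μ (w.1 i).1 = μ i.1))) from ?_]
      · rw [Nat.card_coe_set_eq, Set.ncard_coe_finset]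
      · ext w
        simp only [Set.mem_setOf_eq, Finset.coe_filter, Finset.mem_product,
          Fintype.mem_piFinset, Finset.mem_range, Finset.mem_univ, true_and]
        tauto
    rw [hScard, hWcard]
    refine hMcard.trans (Eq.trans (stepA p e (p ^ e) k μ hμ A t t' ht ht' relK hrelK) ?_)
    rw [stepB p e (p ^ e) k μ A t t' ht' hμ relK hrelK hDD]
    ring
  · rw [if_neg hDD]
    have hempty : {w : Equiv.Perm (Fin k) × (Fin k → ℕ) |
        (∀ i, μ (w.1 i) = μ i) ∧ (∀ i, w.2 i < μ i) ∧
        ∀ i : A, t (w.1⁻¹ i.1) ^ (p ^ e) ^ (w.2 i.1) = t' i} = (∅ : Set _) := by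
      rw [Set.eq_empty_iff_forall_notMem]
      rintro w ⟨h1, h2, h3⟩
      refine hDD ⟨fun i => w.1⁻¹ i.1, ?_, ?_, ?_⟩
      · intro a b hab
        exact Subtype.ext ((Equiv.injective _) hab)
      · intro i
        have h4 := h1 (w.1⁻¹ i.1)
        rw [Equiv.Perm.apply_inv_self] at h4
        exact h4.symm
      · exact fun i => ⟨w.2 i.1, (h3 i).symm⟩
    rw [hempty]
    simp
end
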